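/- arXiv:2011.10129 — 6 statements merged into one kernel-verified Lean document; each statement's English description precedes it below -/
import Mathlib

section
/- Let F be a field containing a primitive n-th root of unity ζ and let λ, μ ∈ F^*. The symbol algebra (λ, μ; F; ζ)_n is a central simple F-algebra of dimension n^2 over F. -/
/-- Let `F` be a field containing a primitive `n`-th root of unity `ζ` and `lam, mu ∈ Fˣ`.
The symbol algebra `(lam, mu; F; ζ)ₙ` — the `F`-algebra with generators `x, y` satisfying
`xⁿ = lam`, `yⁿ = mu`, `y*x = ζ•(x*y)`, with basis `{xⁱyʲ}_{0 ≤ i,j < n}` — is a central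
simple `F`-algebra of dimension `n²` over `F`. -/
theorem stmt_4 (n : ℕ) (hn : 0 < n) (F : Type*) [Field F] (ζ : F)
    (hζ : IsPrimitiveRoot ζ n) (lam mu : F) (hlam : lam ≠ 0) (hmu : mu ≠ 0)
    (A : Type*) [Ring A] [Algebra F A] (x y : A)
    (hx : x ^ n = algebraMap F A lam) (hy : y ^ n = algebraMap F A mu)
    (hyx : y * x = ζ • (x * y))
    (b : Module.Basis (Fin n × Fin n) F A)
    (hb : ∀ i j : Fin n, b (i, j) = x ^ (i : ℕ) * y ^ (j : ℕ)) :
    Algebra.IsCentral F A ∧ IsSimpleRing A ∧ Module.finrank F A = n ^ 2 := by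
  haveI : NeZero n := ⟨hn.ne'⟩
  haveI : Nontrivial A := nontrivial_of_ne (b (0, 0)) 0 (b.ne_zero _)
  -- inverses of x and y
  set xinv : A := lam⁻¹ • x ^ (n - 1) with hxinv_def
  set yinv : A := mu⁻¹ • y ^ (n - 1) with hyinv_def
  have hpow : ∀ z : A, z * z ^ (n-1) = z ^ n := by
    intro z
    rw [← pow_succ']
    congr 1
    omega
  have hpow' : ∀ z : A, z ^ (n-1) * z = z ^ n := by
    intro z
    rw [← pow_succ]
    congr 1
    omega
  have hxx : x * xinv = 1 := by
    rw [hxinv_def, mul_smul_comm, hpow, hx, Algebra.algebraMap_eq_smul_one, smul_smul,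
      inv_mul_cancel₀ hlam, one_smul]
  have hxx' : xinv * x = 1 := by
    rw [hxinv_def, smul_mul_assoc, hpow', hx, Algebra.algebraMap_eq_smul_one, smul_smul,
      inv_mul_cancel₀ hlam, one_smul]
  have hyy : y * yinv = 1 := by
    rw [hyinv_def, mul_smul_comm, hpow, hy, Algebra.algebraMap_eq_smul_one, smul_smul,
      inv_mul_cancel₀ hmu, one_smul]
  have hyy' : yinv * y = 1 := by
    rw [hyinv_def, smul_mul_assoc, hpow', hy, Algebra.algebraMap_eq_smul_one, smul_smul,
      inv_mul_cancel₀ hmu, one_smul]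
  -- commutation rules
  have hyxj : ∀ j : ℕ, y ^ j * x = ζ ^ j • (x * y ^ j) := by
    intro j
    induction j with
    | zero => simp
    | succ j ih =>
      rw [pow_succ, mul_assoc, hyx, mul_smul_comm, ← mul_assoc, ih, smul_mul_assoc,
        smul_smul, ← pow_succ, mul_assoc, ← pow_succ', ← pow_succ]
  have hyxi : ∀ i : ℕ, y * x ^ i = ζ ^ i • (x ^ i * y) := by
    intro i
    induction i with
    | zero => simp
    | succ i ih =>
      rw [pow_succ, ← mul_assoc, ih, smul_mul_assoc, mul_assoc, hyx, mul_smul_comm,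
        smul_smul, ← pow_succ, ← mul_assoc, ← pow_succ]
  -- conjugation action on basis elements
  have hTb : ∀ p : Fin n × Fin n, xinv * b p * x = ζ ^ (p.2 : ℕ) • b p := by
    rintro ⟨i, j⟩
    rw [hb i j]
    have : x ^ (i:ℕ) * y ^ (j:ℕ) * x = ζ ^ (j:ℕ) • (x * (x ^ (i:ℕ) * y ^ (j:ℕ))) := by
      rw [mul_assoc, hyxj, mul_smul_comm, ← mul_assoc, ← mul_assoc, ← pow_succ, ← pow_succ']
    rw [mul_assoc, this, mul_smul_comm, ← mul_assoc, hxx', one_mul]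
  have hSb : ∀ p : Fin n × Fin n, y * b p * yinv = ζ ^ (p.1 : ℕ) • b p := by
    rintro ⟨i, j⟩
    rw [hb i j]
    have : y * (x ^ (i:ℕ) * y ^ (j:ℕ)) = ζ ^ (i:ℕ) • (x ^ (i:ℕ) * y ^ (j:ℕ) * y) := by
      rw [← mul_assoc, hyxi, smul_mul_assoc, mul_assoc, mul_assoc, ← pow_succ, ← pow_succ']
    rw [this, smul_mul_assoc, mul_assoc, hyy, mul_one]
  -- the conjugation linear maps
  set T : A →ₗ[F] A := (LinearMap.mulRight F x).comp (LinearMap.mulLeft F xinv) with hT_def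
  set S : A →ₗ[F] A := (LinearMap.mulRight F yinv).comp (LinearMap.mulLeft F y) with hS_def
  have hT_apply : ∀ a : A, T a = xinv * a * x := fun a => rfl
  have hS_apply : ∀ a : A, S a = y * a * yinv := fun a => rfl
  have hreprT : ∀ (a : A) (p : Fin n × Fin n),
      b.repr (T a) p = ζ ^ (p.2 : ℕ) * b.repr a p := by
    intro a p
    have key : (Finsupp.lapply p).comp (b.repr.toLinearMap.comp T)
        = ζ ^ (p.2 : ℕ) • ((Finsupp.lapply p).comp b.repr.toLinearMap) := by
      refine b.ext fun q => ?_
      simp only [LinearMap.comp_apply, LinearEquiv.coe_toLinearMap, LinearMap.smul_apply,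
        Finsupp.lapply_apply]
      rw [show T (b q) = ζ ^ (q.2 : ℕ) • b q from hTb q]
      simp only [map_smul, Finsupp.smul_apply, b.repr_self, smul_eq_mul]
      rcases eq_or_ne p q with rfl | hpq
      · simp
      · simp [Finsupp.single_apply, (Ne.symm hpq)]
    simpa using LinearMap.congr_fun key a
  have hreprS : ∀ (a : A) (p : Fin n × Fin n),
      b.repr (S a) p = ζ ^ (p.1 : ℕ) * b.repr a p := by
    intro a p
    have key : (Finsupp.lapply p).comp (b.repr.toLinearMap.comp S)
        = ζ ^ (p.1 : ℕ) • ((Finsupp.lapply p).comp b.repr.toLinearMap) := by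
      refine b.ext fun q => ?_
      simp only [LinearMap.comp_apply, LinearEquiv.coe_toLinearMap, LinearMap.smul_apply,
        Finsupp.lapply_apply]
      rw [show S (b q) = ζ ^ (q.1 : ℕ) • b q from hSb q]
      simp only [map_smul, Finsupp.smul_apply, b.repr_self, smul_eq_mul]
      rcases eq_or_ne p q with rfl | hpq
      · simp
      · simp [Finsupp.single_apply, (Ne.symm hpq)]
    simpa using LinearMap.congr_fun key a
  -- primitive root facts
  have hpow_one : ∀ k : Fin n, ζ ^ (k : ℕ) = 1 → k = 0 := by
    intro k hk
    have hd := (hζ.pow_eq_one_iff_dvd (k : ℕ)).1 hk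
    exact Fin.ext (by simpa using Nat.eq_zero_of_dvd_of_lt hd k.isLt)
  refine ⟨⟨fun z hz => ?_⟩, ?_, ?_⟩
  · -- centrality
    rw [Subalgebra.mem_center_iff] at hz
    have hTz : T z = z := by
      rw [hT_apply, mul_assoc, ← hz x, ← mul_assoc, hxx', one_mul]
    have hSz : S z = z := by
      rw [hS_apply, hz y, mul_assoc, hyy, mul_one]
    have hc : ∀ p : Fin n × Fin n, p ≠ (0, 0) → b.repr z p = 0 := by
      intro p hp
      by_contra hc0
      have h2 : p.2 = 0 := by
        have h := hreprT z p
        rw [hTz] at h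
        exact hpow_one _ (mul_right_cancel₀ hc0
          (show ζ ^ (p.2:ℕ) * b.repr z p = 1 * b.repr z p by rw [one_mul, ← h]))
      have h1 : p.1 = 0 := by
        have h := hreprS z p
        rw [hSz] at h
        exact hpow_one _ (mul_right_cancel₀ hc0
          (show ζ ^ (p.1:ℕ) * b.repr z p = 1 * b.repr z p by rw [one_mul, ← h]))
      exact hp (Prod.ext h1 h2)
    refine Algebra.mem_bot.2 ⟨b.repr z (0, 0), ?_⟩
    have hsingle : b.repr z = Finsupp.single (0, 0) (b.repr z (0, 0)) := by
      ext r
      rcases eq_or_ne r (0, 0) with rfl | hr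
      · simp
      · rw [hc r hr, Finsupp.single_apply, if_neg (Ne.symm hr)]
    have : z = b.repr z (0, 0) • b (0, 0) := by
      conv_lhs => rw [← b.repr.symm_apply_apply z, hsingle]
      exact b.repr_symm_single _ _
    conv_rhs => rw [this, hb 0 0]
    rw [Fin.val_zero, pow_zero, pow_zero, one_mul, Algebra.algebraMap_eq_smul_one]
  · -- simplicity
    refine IsSimpleRing.of_eq_bot_or_eq_top fun J => ?_
    rcases eq_or_ne J ⊥ with hJ | hJ
    · exact Or.inl hJ
    right
    have hex : ∃ a : A, a ∈ J ∧ a ≠ 0 := by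
      by_contra h
      push_neg at h
      exact hJ (eq_bot_iff.2 fun a ha => (TwoSidedIdeal.mem_bot A).2 (by
        by_contra h0
        exact h0 (h a ha)))
    classical
    have hP : ∃ m : ℕ, ∃ a : A, a ∈ J ∧ a ≠ 0 ∧ (b.repr a).support.card = m := by
      obtain ⟨a, h1, h2⟩ := hex
      exact ⟨_, a, h1, h2, rfl⟩
    obtain ⟨a, haJ, ha0, hacard⟩ := Nat.find_spec hP
    have hmin : ∀ a' : A, a' ∈ J → a' ≠ 0 → Nat.find hP ≤ (b.repr a').support.card :=
      fun a' h1 h2 => Nat.find_min' hP ⟨a', h1, h2, rfl⟩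
    have hsupp2 : ∀ p ∈ (b.repr a).support, ∀ q ∈ (b.repr a).support, p.2 = q.2 := by
      intro p hp q hq
      by_contra hne
      set a' := T a - ζ ^ ((q.2 : Fin n) : ℕ) • a with ha'
      have ha'J : a' ∈ J := J.sub_mem
        (by rw [hT_apply]; exact J.mul_mem_right _ _ (J.mul_mem_left _ _ haJ))
        (by rw [Algebra.smul_def]; exact J.mul_mem_left _ _ haJ)
      have hrepr' : ∀ r, b.repr a' r = (ζ ^ (r.2:ℕ) - ζ ^ (q.2:ℕ)) * b.repr a r := by
        intro r
        rw [ha', map_sub, map_smul, Finsupp.sub_apply, Finsupp.smul_apply, hreprT,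
          smul_eq_mul, sub_mul]
      have hne0 : a' ≠ 0 := by
        intro h0
        have hz' := hrepr' p
        rw [h0, map_zero, Finsupp.zero_apply] at hz'
        have hcp : b.repr a p ≠ 0 := Finsupp.mem_support_iff.1 hp
        rcases mul_eq_zero.1 hz'.symm with h | h
        · exact hne (Fin.ext (hζ.pow_inj p.2.isLt q.2.isLt (sub_eq_zero.1 h)))
        · exact hcp h
      have hsub : (b.repr a').support ⊂ (b.repr a).support := by
        refine (Finset.ssubset_iff_of_subset fun r hr => ?_).2 ⟨q, hq, ?_⟩
        · rw [Finsupp.mem_support_iff] at hr ⊢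
          intro h0
          exact hr (by rw [hrepr', h0, mul_zero])
        · rw [Finsupp.mem_support_iff, not_not, hrepr', sub_self, zero_mul]
      have hlt := Finset.card_lt_card hsub
      have hge := hmin a' ha'J hne0
      omega
    have hsupp1 : ∀ p ∈ (b.repr a).support, ∀ q ∈ (b.repr a).support, p.1 = q.1 := by
      intro p hp q hq
      by_contra hne
      set a' := S a - ζ ^ ((q.1 : Fin n) : ℕ) • a with ha'
      have ha'J : a' ∈ J := J.sub_mem
        (by rw [hS_apply]; exact J.mul_mem_right _ _ (J.mul_mem_left _ _ haJ))
        (by rw [Algebra.smul_def]; exact J.mul_mem_left _ _ haJ)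
      have hrepr' : ∀ r, b.repr a' r = (ζ ^ (r.1:ℕ) - ζ ^ (q.1:ℕ)) * b.repr a r := by
        intro r
        rw [ha', map_sub, map_smul, Finsupp.sub_apply, Finsupp.smul_apply, hreprS,
          smul_eq_mul, sub_mul]
      have hne0 : a' ≠ 0 := by
        intro h0
        have hz' := hrepr' p
        rw [h0, map_zero, Finsupp.zero_apply] at hz'
        have hcp : b.repr a p ≠ 0 := Finsupp.mem_support_iff.1 hp
        rcases mul_eq_zero.1 hz'.symm with h | h
        · exact hne (Fin.ext (hζ.pow_inj p.1.isLt q.1.isLt (sub_eq_zero.1 h)))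
        · exact hcp h
      have hsub : (b.repr a').support ⊂ (b.repr a).support := by
        refine (Finset.ssubset_iff_of_subset fun r hr => ?_).2 ⟨q, hq, ?_⟩
        · rw [Finsupp.mem_support_iff] at hr ⊢
          intro h0
          exact hr (by rw [hrepr', h0, mul_zero])
        · rw [Finsupp.mem_support_iff, not_not, hrepr', sub_self, zero_mul]
      have hlt := Finset.card_lt_card hsub
      have hge := hmin a' ha'J hne0
      omega
    have hne' : b.repr a ≠ 0 := fun h =>
      ha0 (by rw [← b.repr.symm_apply_apply a, h, map_zero])
    obtain ⟨p0, hp0⟩ := Finsupp.support_nonempty_iff.2 hne'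
    have hc0 : b.repr a p0 ≠ 0 := Finsupp.mem_support_iff.1 hp0
    have hsingle : b.repr a = Finsupp.single p0 (b.repr a p0) := by
      ext r
      rcases eq_or_ne r p0 with rfl | hr
      · simp
      · rw [Finsupp.single_apply, if_neg (Ne.symm hr)]
        by_contra h
        exact hr (Prod.ext (hsupp1 _ (Finsupp.mem_support_iff.2 h) _ hp0)
          (hsupp2 _ (Finsupp.mem_support_iff.2 h) _ hp0))
    have ha_eq : a = b.repr a p0 • b p0 := by
      conv_lhs => rw [← b.repr.symm_apply_apply a, hsingle]
      exact b.repr_symm_single _ _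
    set ux : Aˣ := ⟨x, xinv, hxx, hxx'⟩ with hux
    set uy : Aˣ := ⟨y, yinv, hyy, hyy'⟩ with huy
    set u : Aˣ := ux ^ ((p0.1 : Fin n) : ℕ) * uy ^ ((p0.2 : Fin n) : ℕ) with hu_def
    have hbp0 : b p0 = x ^ ((p0.1 : Fin n) : ℕ) * y ^ ((p0.2 : Fin n) : ℕ) := hb p0.1 p0.2
    have hu : (u : A) = b p0 := by
      rw [hu_def, Units.val_mul, Units.val_pow_eq_pow_val, Units.val_pow_eq_pow_val,
        hux, huy, hbp0]
    have hcalc : (↑u⁻¹ : A) * a = b.repr a p0 • 1 := by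
      conv_lhs => rw [ha_eq]
      rw [mul_smul_comm, ← hu, Units.inv_mul]
    have h1J : (1 : A) ∈ J := by
      have hmem : (↑u⁻¹ : A) * a ∈ J := J.mul_mem_left _ _ haJ
      have h1 : (1 : A) = (b.repr a p0)⁻¹ • ((↑u⁻¹ : A) * a) := by
        rw [hcalc, smul_smul, inv_mul_cancel₀ hc0, one_smul]
      rw [h1, Algebra.smul_def]
      exact J.mul_mem_left _ _ hmem
    exact TwoSidedIdeal.eq_top J h1J
  · rw [Module.finrank_eq_card_basis b, Fintype.card_prod, Fintype.card_fin, sq]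
end

section
/- Let p be an odd prime, ζ a primitive complex p-th root of unity and F = Q(ζ). Then there exists λ ∈ Q^* such that ζ is not in the image of the norm map of the extension F(λ^{1/p})/F. -/
open Polynomial Finset

/-- Coefficient of a product of polynomials as a sum over `finsuppAntidiag`. -/
lemma my_coeff_prod {R : Type*} [CommSemiring R] {ι : Type*} [DecidableEq ι]
    (f : ι → R[X]) (d : ℕ) (s : Finset ι) :
    (∏ j ∈ s, f j).coeff d = ∑ l ∈ s.finsuppAntidiag d, ∏ i ∈ s, (f i).coeff (l i) := by
  have h := PowerSeries.coeff_prod (fun i => ((f i : R[X]) : PowerSeries R)) d s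
  have h2 := map_prod (Polynomial.coeToPowerSeries.ringHom (R := R)) f s
  simp only [Polynomial.coeToPowerSeries.ringHom_apply] at h2
  rw [← Polynomial.coeff_coe, h2, h]
  simp [Polynomial.coeff_coe]

lemma my_coeff_comp_C_mul_X {R : Type*} [CommSemiring R] (f : R[X]) (a : R) (n : ℕ) :
    (f.comp (C a * X)).coeff n = a ^ n * f.coeff n := by
  rw [Polynomial.comp_eq_sum_left, Polynomial.sum_def, Polynomial.finset_sum_coeff]
  have : ∀ i ∈ f.support, (C (f.coeff i) * (C a * X) ^ i).coeff n
      = if i = n then a ^ n * f.coeff n else 0 := by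
    intro i _
    rw [mul_pow, ← C_pow, ← mul_assoc, ← C_mul, coeff_C_mul, coeff_X_pow]
    by_cases h : i = n
    · subst h; simp [mul_comm, mul_assoc]
    · simp [h, Ne.symm h]
  rw [Finset.sum_congr rfl this, Finset.sum_ite_eq' f.support n (fun _ => a ^ n * f.coeff n)]
  by_cases hn : n ∈ f.support
  · simp [hn]
  · simp only [hn, if_false]
    rw [Polynomial.notMem_support_iff.mp hn, mul_zero]

/-- the coefficients in degrees not divisible by `p` of the "norm form" product vanish. -/
lemma my_coeff_eq_zero {F : Type*} [Field F] {p : ℕ} (hp : p.Prime) {w : F}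
    (hw1 : w ≠ 1) (hwp : w ^ p = 1) (g : F[X]) {n : ℕ} (hn : ¬ p ∣ n) :
    (∏ j ∈ Finset.range p, g.comp (C (w ^ j) * X)).coeff n = 0 := by
  haveI : Fact p.Prime := ⟨hp⟩
  by_cases hg : g = 0
  · rw [Finset.prod_eq_zero (Finset.mem_range.mpr hp.pos) (by simp [hg])]
    simp
  set Q := ∏ j ∈ Finset.range p, g.comp (C (w ^ j) * X) with hQ
  have horder : orderOf w = p := orderOf_eq_prime hwp hw1
  have hinv : Q.comp (C w * X) = Q := by
    rw [hQ, Polynomial.prod_comp]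
    have h1 : ∀ j : ℕ, (g.comp (C (w ^ j) * X)).comp (C w * X)
        = g.comp (C (w ^ (j + 1)) * X) := by
      intro j
      rw [Polynomial.comp_assoc]
      congr 1
      simp [mul_comp, C_comp, X_comp, pow_succ, mul_assoc]
    simp only [h1]
    -- reindexing: ∏_{j<p} h (j+1) = ∏_{j<p} h j
    set h : ℕ → F[X] := fun j => g.comp (C (w ^ j) * X) with hh
    have hp0 : h p = h 0 := by simp only [hh]; rw [hwp, pow_zero]
    have h0 : h 0 = g := by simp [hh]
    have hcancel : (∏ j ∈ Finset.range p, h (j + 1)) * h 0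
        = (∏ j ∈ Finset.range p, h j) * h 0 := by
      calc (∏ j ∈ Finset.range p, h (j + 1)) * h 0
          = ∏ j ∈ Finset.range (p + 1), h j := (Finset.prod_range_succ' h p).symm
        _ = (∏ j ∈ Finset.range p, h j) * h p := Finset.prod_range_succ h p
        _ = (∏ j ∈ Finset.range p, h j) * h 0 := by rw [hp0]
    exact mul_right_cancel₀ (by rw [h0]; exact hg) hcancel
  have hcoeff : (w ^ n - 1) * Q.coeff n = 0 := by
    have := congrArg (fun r => Polynomial.coeff r n) hinv
    rw [my_coeff_comp_C_mul_X] at this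
    rw [sub_mul, this, one_mul, sub_self]
  have hwn : w ^ n ≠ 1 := by
    intro h
    exact hn (horder ▸ orderOf_dvd_iff_pow_eq_one.mpr h)
  rcases mul_eq_zero.mp hcoeff with h | h
  · exact absurd (sub_eq_zero.mp h) hwn
  · exact h

lemma my_norm_sum_le {q : ℕ} [Fact q.Prime] {ι : Type*} (s : Finset ι) (f : ι → ℚ_[q])
    (C : ℝ) (h0 : 0 ≤ C) (h : ∀ i ∈ s, ‖f i‖ ≤ C) : ‖∑ i ∈ s, f i‖ ≤ C := by
  induction s using Finset.cons_induction with
  | empty => simpa using h0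
  | cons a s ha ih =>
    rw [Finset.sum_cons]
    refine le_trans (Padic.nonarchimedean _ _) ?_
    exact sup_le (h a (Finset.mem_cons_self a s)) (ih fun i hi => h i (Finset.mem_cons.mpr (Or.inr hi)))

lemma my_val_pow {q : ℕ} [Fact q.Prime] {x : ℚ_[q]} (hx : x ≠ 0) (m : ℕ) :
    (x ^ m).valuation = m * x.valuation := by
  induction m with
  | zero => simp [Padic.valuation_one]
  | succ m ih =>
    rw [pow_succ, Padic.valuation_mul (pow_ne_zero m hx) hx, ih]
    push_cast; ring

lemma my_val_prod {q : ℕ} [Fact q.Prime] {ι : Type*} (s : Finset ι) (f : ι → ℚ_[q])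
    (h : ∀ i ∈ s, f i ≠ 0) : (∏ i ∈ s, f i).valuation = ∑ i ∈ s, (f i).valuation := by
  induction s using Finset.cons_induction with
  | empty => simp [Padic.valuation_one]
  | cons a s ha ih =>
    rw [Finset.prod_cons, Finset.sum_cons,
      Padic.valuation_mul (h a (Finset.mem_cons_self a s))
      (Finset.prod_ne_zero_iff.mpr fun i hi => h i (Finset.mem_cons.mpr (Or.inr hi))),
      ih fun i hi => h i (Finset.mem_cons.mpr (Or.inr hi))]

set_option maxHeartbeats 1600000 in
lemma my_local_key {p q : ℕ} [Fact q.Prime] (hp : p.Prime) (hodd : Odd p) (hqp : q ≠ p)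
    (hq2 : ¬ (p * p ∣ q - 1)) {w : ℚ_[q]} (hw1 : w ≠ 1) (hwp : w ^ p = 1)
    (g : Polynomial ℚ_[q]) (hdeg : g.natDegree < p) (s : Finset ℕ)
    (hmem : ∀ n : ℕ, (∏ j ∈ Finset.range p, g.comp (C (w ^ j) * X)).coeff n ≠ 0 → n ∈ s)
    (hsum : ∑ n ∈ s, (∏ j ∈ Finset.range p, g.comp (C (w ^ j) * X)).coeff n
      * (q : ℚ_[q]) ^ (n / p) = w) :
    False := by
  haveI hpfact : Fact p.Prime := ⟨hp⟩
  have hq : q.Prime := Fact.out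
  have hq1 : 1 < q := hq.one_lt
  have hqR : (1 : ℝ) < (q : ℝ) := by exact_mod_cast hq1
  have hqR0 : (0 : ℝ) < (q : ℝ) := lt_trans one_pos hqR
  have hqQ0 : (q : ℚ_[q]) ≠ 0 := by exact_mod_cast hq.ne_zero
  have hw0 : w ≠ 0 := by
    intro h; rw [h, zero_pow hp.ne_zero] at hwp; exact zero_ne_one hwp
  have hwnorm : ‖w‖ = 1 := by
    have h1 : ‖w‖ ^ p = 1 := by rw [← norm_pow, hwp, norm_one]
    rcases lt_trichotomy ‖w‖ 1 with h | h | h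
    · exact absurd h1 (ne_of_lt (pow_lt_one₀ (norm_nonneg w) h hp.ne_zero))
    · exact h
    · exact absurd h1 (ne_of_gt (one_lt_pow₀ h hp.ne_zero))
  set Q : Polynomial ℚ_[q] := ∏ j ∈ Finset.range p, g.comp (C (w ^ j) * X) with hQdef
  have hg0 : g ≠ 0 := by
    intro h
    apply hw0
    rw [← hsum]
    apply Finset.sum_eq_zero
    intro n _
    rw [hQdef, Finset.prod_eq_zero (Finset.mem_range.mpr hp.pos) (by simp [h])]
    simp
  -- the Newton polygon data
  set v : ℕ → ℤ := fun i => (g.coeff i).valuation with hv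
  set t : ℕ → ℤ := fun i => p * v i + i with ht
  obtain ⟨i₀, hi₀, hmin⟩ := Finset.exists_min_image g.support t
    (Polynomial.nonempty_support_iff.mpr hg0)
  have hγ₀ : g.coeff i₀ ≠ 0 := Polynomial.mem_support_iff.mp hi₀
  have hi₀p : i₀ < p := lt_of_le_of_lt (Polynomial.le_natDegree_of_ne_zero hγ₀) hdeg
  have htstrict : ∀ i ∈ g.support, i ≠ i₀ → t i₀ + 1 ≤ t i := by
    intro i hi hne
    rcases eq_or_lt_of_le (hmin i hi) with h | h
    · exfalso
      have hd : (p : ℤ) ∣ (i : ℤ) - (i₀ : ℤ) := by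
        refine ⟨v i₀ - v i, ?_⟩
        have := h
        simp only [ht] at this
        linarith
      have hip : i < p := lt_of_le_of_lt (Polynomial.le_natDegree_of_ne_zero
        (Polynomial.mem_support_iff.mp hi)) hdeg
      have habs : |(i : ℤ) - (i₀ : ℤ)| < p := by
        rw [abs_lt]; constructor <;> [skip; skip] <;> omega
      have := Int.eq_zero_of_abs_lt_dvd hd habs
      omega
    · omega
  -- per-term bound
  set T : ℕ → (ℕ →₀ ℕ) → ℚ_[q] := fun n μ =>
    (∏ j ∈ Finset.range p, (g.comp (C (w ^ j) * X)).coeff (μ j)) * (q : ℚ_[q]) ^ (n / p)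
    with hT
  have hterm : ∀ n : ℕ, p ∣ n → ∀ μ ∈ (Finset.range p).finsuppAntidiag n,
      (∃ j ∈ Finset.range p, μ j ≠ i₀) → ‖T n μ‖ ≤ (q : ℝ) ^ (-(t i₀ + 1)) := by
    intro n hn μ hμ hex
    obtain ⟨j₁, hj₁, hj₁ne⟩ := hex
    obtain ⟨hμsum, hμsupp⟩ := Finset.mem_finsuppAntidiag.mp hμ
    have hcc : ∀ j : ℕ, (g.comp (C (w ^ j) * X)).coeff (μ j)
        = (w ^ j) ^ (μ j) * g.coeff (μ j) := fun j => my_coeff_comp_C_mul_X g (w ^ j) (μ j)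
    by_cases hzero : ∃ j ∈ Finset.range p, g.coeff (μ j) = 0
    · obtain ⟨j₂, hj₂, hj₂0⟩ := hzero
      have : T n μ = 0 := by
        rw [hT]
        simp only
        rw [Finset.prod_eq_zero hj₂ (by rw [hcc j₂, hj₂0, mul_zero]), zero_mul]
      rw [this, norm_zero]
      positivity
    push_neg at hzero
    have hsupp : ∀ j ∈ Finset.range p, μ j ∈ g.support :=
      fun j hj => Polynomial.mem_support_iff.mpr (hzero j hj)
    -- split off the root-of-unity factor
    have hsplit : T n μ = (∏ j ∈ Finset.range p, (w ^ j) ^ (μ j)) *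
        ((∏ j ∈ Finset.range p, g.coeff (μ j)) * (q : ℚ_[q]) ^ (n / p)) := by
      rw [hT]
      simp only
      rw [Finset.prod_congr rfl (fun j _ => hcc j), Finset.prod_mul_distrib, mul_assoc]
    set rest : ℚ_[q] := (∏ j ∈ Finset.range p, g.coeff (μ j)) * (q : ℚ_[q]) ^ (n / p)
      with hrest
    have hwpartnorm : ‖∏ j ∈ Finset.range p, (w ^ j) ^ (μ j)‖ = 1 := by
      rw [norm_prod]
      apply Finset.prod_eq_one
      intro j _
      rw [norm_pow, norm_pow, hwnorm, one_pow, one_pow]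
    have hTnorm : ‖T n μ‖ = ‖rest‖ := by rw [hsplit, norm_mul, hwpartnorm, one_mul]
    have hprodne : (∏ j ∈ Finset.range p, g.coeff (μ j)) ≠ 0 :=
      Finset.prod_ne_zero_iff.mpr fun j hj => hzero j hj
    have hrestne : rest ≠ 0 := mul_ne_zero hprodne (pow_ne_zero _ hqQ0)
    have hval : rest.valuation = (∑ j ∈ Finset.range p, v (μ j)) + (n / p : ℕ) := by
      rw [hrest, Padic.valuation_mul hprodne (pow_ne_zero _ hqQ0),
        my_val_prod _ _ (fun j hj => hzero j hj), my_val_pow hqQ0, Padic.valuation_p, mul_one]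
    -- lower bound for the valuation
    have hsum_t : ∑ j ∈ Finset.range p, t (μ j)
        = p * (∑ j ∈ Finset.range p, v (μ j)) + (n : ℤ) := by
      have hn' : ∑ j ∈ Finset.range p, (μ j : ℤ) = (n : ℤ) := by
        exact_mod_cast congrArg (Nat.cast : ℕ → ℤ) hμsum
      simp only [ht]
      rw [Finset.sum_add_distrib, Finset.mul_sum, hn']
    have hge : (p : ℤ) * t i₀ + 1 ≤ ∑ j ∈ Finset.range p, t (μ j) := by
      have h2 : t i₀ + 1 ≤ t (μ j₁) := htstrict _ (hsupp j₁ hj₁) hj₁ne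
      have h3 : ((Finset.range p).erase j₁).card • t i₀
          ≤ ∑ j ∈ (Finset.range p).erase j₁, t (μ j) :=
        Finset.card_nsmul_le_sum _ _ _ fun j hj =>
          hmin _ (hsupp j (Finset.mem_of_mem_erase hj))
      have hcard : ((Finset.range p).erase j₁).card = p - 1 := by
        rw [Finset.card_erase_of_mem hj₁, Finset.card_range]
      rw [hcard] at h3
      have hps : ((p - 1 : ℕ) : ℤ) = (p : ℤ) - 1 := by
        have := hp.one_lt; push_cast [Nat.cast_sub (le_of_lt this)]; ring
      calc (p : ℤ) * t i₀ + 1 = (t i₀ + 1) + ((p : ℤ) - 1) * t i₀ := by ring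
        _ ≤ t (μ j₁) + ∑ j ∈ (Finset.range p).erase j₁, t (μ j) := by
            apply add_le_add h2
            calc ((p : ℤ) - 1) * t i₀ = ((p - 1 : ℕ) : ℤ) * t i₀ := by rw [hps]
              _ = (p - 1 : ℕ) • t i₀ := by rw [nsmul_eq_mul]
              _ ≤ _ := h3
        _ = ∑ j ∈ Finset.range p, t (μ j) := Finset.add_sum_erase (Finset.range p) (fun j => t (μ j)) hj₁
    have hnp : (p : ℤ) * ((n / p : ℕ) : ℤ) = (n : ℤ) := by
      exact_mod_cast congrArg (Nat.cast : ℕ → ℤ) (Nat.mul_div_cancel' hn)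
    have hvle : t i₀ + 1 ≤ rest.valuation := by
      have hmul : (p : ℤ) * rest.valuation = ∑ j ∈ Finset.range p, t (μ j) := by
        rw [hval, hsum_t, mul_add, hnp]
      have : (p : ℤ) * t i₀ < (p : ℤ) * rest.valuation := by omega
      have hlt : t i₀ < rest.valuation :=
        lt_of_mul_lt_mul_left this (by positivity)
      omega
    rw [hTnorm, Padic.norm_eq_zpow_neg_valuation hrestne]
    exact (zpow_right_strictMono₀ hqR).monotone (by omega)
  -- the diagonal term
  have hdvd0 : p ∣ p * i₀ := Dvd.intro i₀ rfl
  have hdivpi : p * i₀ / p = i₀ := Nat.mul_div_cancel_left i₀ hp.pos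
  set dμ : ℕ →₀ ℕ := Finsupp.indicator (Finset.range p) (fun _ _ => i₀) with hdμ
  have hdμ_apply : ∀ j ∈ Finset.range p, dμ j = i₀ := by
    intro j hj; rw [hdμ, Finsupp.indicator_of_mem hj]
  have hdμ_mem : dμ ∈ (Finset.range p).finsuppAntidiag (p * i₀) := by
    rw [Finset.mem_finsuppAntidiag]
    constructor
    · show ∑ j ∈ Finset.range p, dμ j = p * i₀
      rw [Finset.sum_congr rfl hdμ_apply, Finset.sum_const, Finset.card_range, smul_eq_mul]
    · exact Finsupp.support_indicator_subset _ _
  set D : ℚ_[q] := g.coeff i₀ ^ p * (q : ℚ_[q]) ^ i₀ with hD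
  have hDiagVal : T (p * i₀) dμ = D := by
    rw [hT]
    simp only
    rw [hdivpi, hD]
    congr 1
    rw [Finset.prod_congr rfl (fun j hj => by
      rw [hdμ_apply j hj, my_coeff_comp_C_mul_X]), Finset.prod_mul_distrib,
      Finset.prod_const, Finset.card_range]
    have hwfac : (∏ j ∈ Finset.range p, (w ^ j) ^ i₀) = 1 := by
      have h1 : ∀ j, (w ^ j) ^ i₀ = w ^ (j * i₀) := fun j => (pow_mul w j i₀).symm
      rw [Finset.prod_congr rfl (fun j _ => h1 j), Finset.prod_pow_eq_pow_sum,
        ← Finset.sum_mul]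
      obtain ⟨m, hm⟩ : ∃ m, ∑ j ∈ Finset.range p, j = p * m := by
        obtain ⟨k, hk⟩ := hodd
        refine ⟨k, ?_⟩
        have h2 := Finset.sum_range_id_mul_two p
        have h3 : p - 1 = 2 * k := by omega
        rw [h3] at h2
        have h4 : (∑ j ∈ Finset.range p, j) * 2 = (p * k) * 2 := by rw [h2]; ring
        exact Nat.eq_of_mul_eq_mul_right two_pos h4
      rw [hm, mul_assoc, pow_mul, hwp, one_pow]
    rw [hwfac, one_mul]
  have hDne : D ≠ 0 := mul_ne_zero (pow_ne_zero _ hγ₀) (pow_ne_zero _ hqQ0)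
  have hDval : D.valuation = t i₀ := by
    rw [hD, Padic.valuation_mul (pow_ne_zero _ hγ₀) (pow_ne_zero _ hqQ0),
      my_val_pow hγ₀, my_val_pow hqQ0, Padic.valuation_p, mul_one, ht]
  have hDnorm : ‖D‖ = (q : ℝ) ^ (-t i₀) := by
    rw [Padic.norm_eq_zpow_neg_valuation hDne, hDval]
  have hstep : (q : ℝ) ^ (-(t i₀ + 1)) < (q : ℝ) ^ (-t i₀) :=
    zpow_right_strictMono₀ hqR (by omega)
  -- μ ≠ dμ criterion
  have hnediag : ∀ n : ℕ, ∀ μ ∈ (Finset.range p).finsuppAntidiag n, μ ≠ dμ →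
      ∃ j ∈ Finset.range p, μ j ≠ i₀ := by
    intro n μ hμ hne
    by_contra hall
    push_neg at hall
    apply hne
    obtain ⟨_, hμsupp⟩ := Finset.mem_finsuppAntidiag.mp hμ
    ext j
    by_cases hj : j ∈ Finset.range p
    · rw [hall j hj, hdμ_apply j hj]
    · rw [Finsupp.notMem_support_iff.mp (fun hc => hj (hμsupp hc)), hdμ,
        Finsupp.indicator_of_notMem hj]
  -- sum of a coefficient times power, as sum of T-terms
  have hcoeffT : ∀ n : ℕ, Q.coeff n * (q : ℚ_[q]) ^ (n / p)
      = ∑ μ ∈ (Finset.range p).finsuppAntidiag n, T n μ := by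
    intro n
    rw [hQdef, my_coeff_prod, Finset.sum_mul]
  -- the diagonal coefficient estimate
  have hcoefdiag : ‖Q.coeff (p * i₀) * (q : ℚ_[q]) ^ i₀ - D‖ ≤ (q : ℝ) ^ (-(t i₀ + 1)) := by
    have h1 : Q.coeff (p * i₀) * (q : ℚ_[q]) ^ i₀
        = ∑ μ ∈ (Finset.range p).finsuppAntidiag (p * i₀), T (p * i₀) μ := by
      have := hcoeffT (p * i₀)
      rwa [hdivpi] at this
    rw [h1, ← Finset.add_sum_erase _ _ hdμ_mem, hDiagVal, add_comm, add_sub_cancel_right]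
    apply my_norm_sum_le _ _ _ (le_of_lt (zpow_pos hqR0 _))
    intro μ hμ
    exact hterm (p * i₀) hdvd0 μ (Finset.mem_of_mem_erase hμ)
      (hnediag _ μ (Finset.mem_of_mem_erase hμ) (Finset.ne_of_mem_erase hμ))
  have hQcne : Q.coeff (p * i₀) ≠ 0 := by
    intro h0
    rw [h0, zero_mul, zero_sub, norm_neg] at hcoefdiag
    rw [hDnorm] at hcoefdiag
    exact absurd (lt_of_le_of_lt hcoefdiag hstep) (lt_irrefl _)
  have hpis : p * i₀ ∈ s := hmem _ hQcne
  -- terms away from the diagonal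
  have herase : ∀ n ∈ s.erase (p * i₀),
      ‖Q.coeff n * (q : ℚ_[q]) ^ (n / p)‖ ≤ (q : ℝ) ^ (-(t i₀ + 1)) := by
    intro n hn
    have hne : n ≠ p * i₀ := Finset.ne_of_mem_erase hn
    by_cases hdvd : p ∣ n
    · rw [hcoeffT]
      apply my_norm_sum_le _ _ _ (le_of_lt (zpow_pos hqR0 _))
      intro μ hμ
      refine hterm n hdvd μ hμ (hnediag n μ hμ ?_)
      intro hc
      apply hne
      obtain ⟨hμsum, _⟩ := Finset.mem_finsuppAntidiag.mp hμ
      obtain ⟨hdsum, _⟩ := Finset.mem_finsuppAntidiag.mp hdμ_mem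
      rw [← hμsum, hc, hdsum]
    · rw [hQdef, my_coeff_eq_zero hp hw1 hwp g hdvd, zero_mul, norm_zero]
      exact le_of_lt (zpow_pos hqR0 _)
  -- the master estimate
  have hfinal : ‖w - D‖ ≤ (q : ℝ) ^ (-(t i₀ + 1)) := by
    have hw_eq : w = Q.coeff (p * i₀) * (q : ℚ_[q]) ^ i₀
        + ∑ n ∈ s.erase (p * i₀), Q.coeff n * (q : ℚ_[q]) ^ (n / p) := by
      rw [← hsum]
      rw [← Finset.add_sum_erase s (fun n => Q.coeff n * (q : ℚ_[q]) ^ (n / p)) hpis]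
      simp only [hdivpi]
    rw [hw_eq]
    have : Q.coeff (p * i₀) * (q : ℚ_[q]) ^ i₀
        + ∑ n ∈ s.erase (p * i₀), Q.coeff n * (q : ℚ_[q]) ^ (n / p) - D
        = (Q.coeff (p * i₀) * (q : ℚ_[q]) ^ i₀ - D)
          + ∑ n ∈ s.erase (p * i₀), Q.coeff n * (q : ℚ_[q]) ^ (n / p) := by ring
    rw [this]
    refine le_trans (Padic.nonarchimedean _ _) (sup_le hcoefdiag ?_)
    exact my_norm_sum_le _ _ _ (le_of_lt (zpow_pos hqR0 _)) herase
  have hwD : ‖w - D‖ < ‖D‖ := by rw [hDnorm]; exact lt_of_le_of_lt hfinal hstep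
  -- ‖D‖ = ‖w‖ = 1
  have hDnorm1 : ‖D‖ = 1 := by
    have hle : ‖w‖ ≤ ‖D‖ := by
      have : w = D + (w - D) := by ring
      rw [this]
      exact le_trans (Padic.nonarchimedean _ _) (sup_le le_rfl (le_of_lt hwD))
    have hge : ‖D‖ ≤ ‖w‖ := by
      by_contra hcon
      push_neg at hcon
      have h1 : D = w + -(w - D) := by ring
      have h2 : ‖D‖ = ‖w + -(w - D)‖ := congrArg norm h1
      have h3 : ‖D‖ ≤ ‖w‖ ⊔ ‖w - D‖ := by
        rw [h2]
        have := Padic.nonarchimedean w (-(w - D))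
        rwa [norm_neg] at this
      exact absurd (lt_of_le_of_lt h3 (sup_lt_iff.mpr ⟨hcon, hwD⟩)) (lt_irrefl _)
    rw [← hwnorm]
    exact le_antisymm hge hle
  have ht0 : t i₀ = 0 := by
    have h1 : (q : ℝ) ^ (-t i₀) = (q : ℝ) ^ (0 : ℤ) := by
      rw [← hDnorm, hDnorm1, zpow_zero]
    have h2 := zpow_right_injective₀ hqR0 (ne_of_gt hqR) h1
    omega
  have hv0 : v i₀ = 0 := by
    have h1 : (p : ℤ) * v i₀ + i₀ = 0 := ht0
    have h2 : (0 : ℤ) ≤ i₀ := Int.natCast_nonneg i₀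
    have h3 : (i₀ : ℤ) < p := by exact_mod_cast hi₀p
    have h4 : (2 : ℤ) ≤ p := by exact_mod_cast hp.two_le
    rcases lt_trichotomy (v i₀) 0 with h | h | h
    · have : v i₀ ≤ -1 := by omega
      nlinarith
    · exact h
    · have : 1 ≤ v i₀ := by omega
      nlinarith
  have hi₀0 : i₀ = 0 := by
    have h1 : (p : ℤ) * v i₀ + i₀ = 0 := ht0
    rw [hv0] at h1
    omega
  -- pass to ℤ_[q]
  have hγnorm : ‖g.coeff i₀‖ = 1 := by
    rw [Padic.norm_eq_zpow_neg_valuation hγ₀]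
    have hvv : (g.coeff i₀).valuation = v i₀ := rfl
    rw [hvv, hv0, neg_zero, zpow_zero]
  have hfinal2 : ‖w - g.coeff i₀ ^ p‖ < 1 := by
    have hD2 : D = g.coeff i₀ ^ p := by rw [hD, hi₀0, pow_zero, mul_one]
    rw [← hD2]
    calc ‖w - D‖ ≤ (q : ℝ) ^ (-(t i₀ + 1)) := hfinal
      _ < (q : ℝ) ^ (0 : ℤ) := zpow_right_strictMono₀ hqR (by omega)
      _ = 1 := zpow_zero _
  set W : ℤ_[q] := ⟨w, le_of_eq hwnorm⟩ with hW
  set G : ℤ_[q] := ⟨g.coeff i₀, le_of_eq hγnorm⟩ with hG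
  have hWGcast : ((W - G ^ p : ℤ_[q]) : ℚ_[q]) = w - g.coeff i₀ ^ p := by
    push_cast [hW, hG]
    rfl
  have hsubnorm : ‖W - G ^ p‖ < 1 := by
    rw [PadicInt.norm_def, hWGcast]
    exact hfinal2
  have hker : PadicInt.toZMod (W - G ^ p) = 0 := by
    have hmax : W - G ^ p ∈ IsLocalRing.maximalIdeal ℤ_[q] := by
      rw [PadicInt.maximalIdeal_eq_span_p, Ideal.mem_span_singleton]
      exact (PadicInt.norm_lt_one_iff_dvd _).mp hsubnorm
    rw [← PadicInt.ker_toZMod] at hmax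
    exact hmax
  set u : ZMod q := PadicInt.toZMod W with hu
  set a : ZMod q := PadicInt.toZMod G with ha
  have hua : u = a ^ p := by
    rw [map_sub, map_pow, sub_eq_zero] at hker
    rw [hu, ha, hker]
  have hWp : W ^ p = 1 := by
    have : ((W ^ p : ℤ_[q]) : ℚ_[q]) = ((1 : ℤ_[q]) : ℚ_[q]) := by push_cast [hW]; exact hwp
    exact Subtype.ext this
  have hupow : u ^ p = 1 := by rw [hu, ← map_pow, hWp, map_one]
  have hWne1 : W ≠ 1 := by
    intro h
    apply hw1
    have := congrArg (fun x : ℤ_[q] => (x : ℚ_[q])) h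
    simpa [hW] using this
  have hu1 : u ≠ 1 := by
    intro huone
    have hgeom : (∑ i ∈ Finset.range p, W ^ i) * (W - 1) = W ^ p - 1 := geom_sum_mul W p
    rw [hWp, sub_self] at hgeom
    have hWm1 : W - 1 ≠ 0 := sub_ne_zero.mpr hWne1
    have hS0 : (∑ i ∈ Finset.range p, W ^ i) = 0 :=
      (mul_eq_zero.mp hgeom).resolve_right hWm1
    have := congrArg PadicInt.toZMod hS0
    rw [map_sum, map_zero] at this
    simp only [map_pow, ← hu, huone, one_pow] at this
    rw [Finset.sum_const, Finset.card_range, nsmul_eq_mul, mul_one] at this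
    have hqp' : (q : ℕ) ∣ p := (ZMod.natCast_eq_zero_iff p q).mp this
    exact hqp ((Nat.prime_dvd_prime_iff_eq hq hp).mp hqp')
  have ha0 : a ≠ 0 := by
    intro h
    rw [h, zero_pow hp.ne_zero] at hua
    rw [hua, zero_pow hp.ne_zero] at hupow
    exact zero_ne_one hupow
  have haU : IsUnit a := isUnit_iff_ne_zero.mpr ha0
  set U : (ZMod q)ˣ := haU.unit with hUdef
  have hUval : (U : ZMod q) = a := haU.unit_spec
  have hVval : ((U ^ p : (ZMod q)ˣ) : ZMod q) = u := by
    rw [Units.val_pow_eq_pow_val, hUval, ← hua]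
  have hVne : U ^ p ≠ 1 := by
    intro h
    apply hu1
    rw [← hVval, h, Units.val_one]
  have hVp : (U ^ p) ^ p = 1 := by
    apply Units.ext
    rw [Units.val_pow_eq_pow_val, hVval, hupow, Units.val_one]
  have hordV : orderOf (U ^ p) = p := orderOf_eq_prime hVp hVne
  have hordpow : orderOf (U ^ p) = orderOf U / (orderOf U).gcd p := orderOf_pow U
  have hcard : orderOf U ∣ q - 1 := by
    have h1 := orderOf_dvd_card (x := U)
    rwa [ZMod.card_units_eq_totient, Nat.totient_prime hq] at h1
  rcases hp.eq_one_or_self_of_dvd _ (Nat.gcd_dvd_right (orderOf U) p) with hgcd | hgcd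
  · rw [hordpow, hgcd, Nat.div_one] at hordV
    exact hVne (by rw [← hordV]; exact pow_orderOf_eq_one U)
  · have hpd : p ∣ orderOf U := hgcd ▸ Nat.gcd_dvd_left (orderOf U) p
    rw [hordpow, hgcd] at hordV
    have hd : orderOf U = p * p := by
      have h5 : orderOf U / p = p := hordV
      have h6 := Nat.div_mul_cancel hpd
      rw [h5] at h6
      omega
    exact hq2 (hd ▸ hcard)


lemma my_exists_q {p : ℕ} (hp : p.Prime) :
    ∃ q : ℕ, q.Prime ∧ p < q ∧ p ∣ q - 1 ∧ ¬ (p * p ∣ q - 1) := by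
  haveI : NeZero (p ^ 2) := ⟨pow_ne_zero 2 hp.ne_zero⟩
  have hcop : Nat.Coprime (1 + p) (p ^ 2) :=
    Nat.Coprime.pow_right 2 (by simp [Nat.coprime_comm, Nat.add_comm])
  have hunit : IsUnit ((1 + p : ℕ) : ZMod (p ^ 2)) := (ZMod.isUnit_iff_coprime _ _).mpr hcop
  obtain ⟨q, hqgt, hq, hqmod⟩ := Nat.forall_exists_prime_gt_and_eq_mod hunit p
  have hmod : q ≡ 1 + p [MOD p ^ 2] := (ZMod.natCast_eq_natCast_iff _ _ _).mp hqmod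
  have hq1 : 1 ≤ q := hq.one_le
  have hp2 : 2 ≤ p := hp.two_le
  refine ⟨q, hq, hqgt, ?_, ?_⟩
  · have hmodp : q ≡ 1 + p [MOD p] := hmod.of_dvd (dvd_pow_self p two_ne_zero)
    have h1 : (1 + p) ≡ 1 [MOD p] := by
      have : (1 : ℕ) ≡ 1 + p [MOD p] := (Nat.modEq_iff_dvd' (by omega)).mpr ⟨1, by omega⟩
      exact this.symm
    have h2 : q ≡ 1 [MOD p] := hmodp.trans h1
    exact (Nat.modEq_iff_dvd' hq1).mp h2.symm
  · intro hdvd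
    have hdvd' : p ^ 2 ∣ q - 1 := by rw [pow_two]; exact hdvd
    have h3 : (1 : ℕ) ≡ q [MOD p ^ 2] := (Nat.modEq_iff_dvd' hq1).mpr hdvd'
    have h4 : (1 : ℕ) ≡ 1 + p [MOD p ^ 2] := h3.trans hmod
    have h5 : p ^ 2 ∣ (1 + p) - 1 := (Nat.modEq_iff_dvd' (by omega)).mp h4
    have h6 : p ^ 2 ∣ p := by simpa using h5
    have := Nat.le_of_dvd hp.pos h6
    nlinarith

lemma my_exists_primroot {p q : ℕ} [Fact q.Prime] (hp : p.Prime) (hq : q.Prime)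
    (hlt : p < q) (hdvd : p ∣ q - 1) : ∃ w : ℚ_[q], IsPrimitiveRoot w p := by
  haveI : Fact p.Prime := ⟨hp⟩
  -- an element of order p in (ZMod q)ˣ
  obtain ⟨γ, hγ⟩ := IsCyclic.exists_generator (α := (ZMod q)ˣ)
  have hord : orderOf γ = q - 1 := by
    rw [orderOf_eq_card_of_forall_mem_zpowers hγ, Nat.card_eq_fintype_card,
      ZMod.card_units_eq_totient, Nat.totient_prime hq]
  obtain ⟨m, hm⟩ := hdvd
  have hm0 : 0 < m := by
    rcases Nat.eq_zero_or_pos m with h | h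
    · rw [h, mul_zero] at hm
      have := hp.two_le
      omega
    · exact h
  set b : (ZMod q)ˣ := γ ^ m with hb
  have hordb : orderOf b = p := by
    rw [hb, orderOf_pow, hord, hm, Nat.gcd_eq_right ⟨p, by ring⟩,
      Nat.mul_div_assoc p (dvd_refl m), Nat.div_self hm0, mul_one]
  have hbp : b ^ p = 1 := by rw [← hordb]; exact pow_orderOf_eq_one b
  have hbne1 : b ≠ 1 := by
    intro h
    rw [h, orderOf_one] at hordb
    have := hp.two_le
    omega
  -- Hensel lifting
  set bn : ℤ_[q] := ((b : ZMod q).val : ℤ_[q]) with hbn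
  have hbn_map : PadicInt.toZMod bn = (b : ZMod q) := by
    rw [hbn, map_natCast]
    simp [ZMod.natCast_val, ZMod.cast_id]
  have hker_iff : ∀ x : ℤ_[q], PadicInt.toZMod x = 0 ↔ ‖x‖ < 1 := by
    intro x
    rw [← RingHom.mem_ker, PadicInt.ker_toZMod, PadicInt.maximalIdeal_eq_span_p,
      Ideal.mem_span_singleton, ← PadicInt.norm_lt_one_iff_dvd]
  have hunitnorm : ∀ x : ℤ_[q], PadicInt.toZMod x ≠ 0 → ‖x‖ = 1 := by
    intro x hx
    rcases lt_or_eq_of_le (PadicInt.norm_le_one x) with h | h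
    · exact absurd ((hker_iff x).mpr h) hx
    · exact h
  set Fq : Polynomial ℤ_[q] := X ^ p - 1 with hFq
  have hevalF : ∀ x : ℤ_[q], Fq.eval x = x ^ p - 1 := by
    intro x; rw [hFq]; simp
  have hevalderiv : ∀ x : ℤ_[q], Fq.derivative.eval x = (p : ℤ_[q]) * x ^ (p - 1) := by
    intro x
    rw [hFq, derivative_sub, derivative_one, derivative_X_pow, sub_zero]
    simp
  have hpnorm : ‖(p : ℤ_[q])‖ = 1 := by
    apply hunitnorm
    intro h
    rw [map_natCast] at h
    have h2 := (ZMod.natCast_eq_zero_iff p q).mp h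
    have := Nat.le_of_dvd hp.pos h2
    omega
  have hbnnorm : ‖bn‖ = 1 := by
    apply hunitnorm
    intro h
    rw [hbn_map] at h
    exact b.ne_zero h
  have hderivnorm : ‖Fq.derivative.eval bn‖ = 1 := by
    rw [hevalderiv, norm_mul, hpnorm, norm_pow, hbnnorm, one_pow, one_mul]
  have hhyp : ‖Fq.eval bn‖ < ‖Fq.derivative.eval bn‖ ^ 2 := by
    rw [hderivnorm, one_pow, hevalF]
    apply (hker_iff _).mp
    rw [map_sub, map_pow, hbn_map, map_one, ← Units.val_pow_eq_pow_val, hbp,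
      Units.val_one, sub_self]
  obtain ⟨ω, hω1, hω2, _, _⟩ := hensels_lemma hhyp
  simp only [Polynomial.coe_aeval_eq_eval] at hω1 hω2
  have hωp : ω ^ p = 1 := by
    have := hevalF ω ▸ hω1
    exact sub_eq_zero.mp this
  have hωmap : PadicInt.toZMod ω = (b : ZMod q) := by
    rw [hderivnorm] at hω2
    have := (hker_iff _).mpr hω2
    rw [map_sub, hbn_map, sub_eq_zero] at this
    exact this
  have hωne1 : ω ≠ 1 := by
    intro h
    apply hbne1
    apply Units.ext
    rw [← hωmap, h, map_one, Units.val_one]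
  refine ⟨(ω : ℚ_[q]), ?_⟩
  have hwp : ((ω : ℚ_[q])) ^ p = 1 := by
    have := congrArg (fun x : ℤ_[q] => (x : ℚ_[q])) hωp
    push_cast at this
    exact this
  have hwne1 : ((ω : ℚ_[q])) ≠ 1 := by
    intro h
    exact hωne1 (Subtype.ext h)
  have := orderOf_eq_prime hwp hwne1
  exact this ▸ IsPrimitiveRoot.orderOf (ω : ℚ_[q])

open IntermediateField

set_option maxHeartbeats 1600000 in
/-- Let `p` be an odd prime, `ζ` a primitive `p`-th root of unity and `F = ℚ(ζ)`.  Then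
there exists `lam ∈ ℚˣ` such that `ζ` is not in the image of the norm map of the extension
`F(lam^{1/p})/F`. -/
theorem stmt_11 (p : ℕ+) (hp : (p : ℕ).Prime) (hodd : Odd (p : ℕ))
    (F : Type*) [Field F] [Algebra ℚ F] [IsCyclotomicExtension {(p : ℕ)} ℚ F]
    (ζ : F) (hζ : IsPrimitiveRoot ζ p) :
    ∃ lam : ℚ, lam ≠ 0 ∧ ∀ z : AlgebraicClosure F,
      z ^ (p : ℕ) = algebraMap F (AlgebraicClosure F) (algebraMap ℚ F lam) →
      ¬ ∃ k : F⟮z⟯, Algebra.norm F k = ζ := by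
  classical
  have hp1 : 1 < (p : ℕ) := hp.one_lt
  obtain ⟨q, hq, hpq, hqd1, hqd2⟩ := my_exists_q hp
  haveI hqf : Fact q.Prime := ⟨hq⟩
  obtain ⟨w₀, hw₀⟩ := my_exists_primroot hp hq hpq hqd1
  haveI : CharZero F := charZero_of_injective_algebraMap (algebraMap ℚ F).injective
  set E := AlgebraicClosure F with hE
  set qF : F := algebraMap ℚ F (q : ℚ) with hqF
  have hqF0 : qF ≠ 0 := by
    rw [hqF]
    simp only [ne_eq, _root_.map_eq_zero]
    exact Nat.cast_ne_zero.mpr hq.ne_zero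
  refine ⟨(q : ℚ), Nat.cast_ne_zero.mpr hq.ne_zero, ?_⟩
  intro z hz hex
  obtain ⟨k, hk⟩ := hex
  -- `q` is not a `p`-th power in `F`
  have hfinrank : Module.finrank ℚ F = (p : ℕ) - 1 := by
    rw [IsCyclotomicExtension.finrank F (Polynomial.cyclotomic.irreducible_rat p.pos),
      Nat.totient_prime hp]
  have hnotpow : ∀ b : F, b ^ (p : ℕ) ≠ qF := by
    intro b hb
    have hN := congrArg (Algebra.norm ℚ) hb
    rw [map_pow, hqF, Algebra.norm_algebraMap, hfinrank] at hN
    set r := Algebra.norm ℚ b with hr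
    have hq0 : ((q : ℚ)) ≠ 0 := by exact_mod_cast hq.ne_zero
    have hr0 : r ≠ 0 := by
      intro h
      rw [h, zero_pow hp.ne_zero] at hN
      exact (pow_ne_zero _ hq0) hN.symm
    have hval := congrArg (padicValRat q) hN
    rw [padicValRat.pow r, padicValRat.pow (q : ℚ), padicValRat.self hq.one_lt, mul_one] at hval
    have hdvdP : ((p : ℕ) : ℤ) ∣ (((p : ℕ) - 1 : ℕ) : ℤ) := ⟨padicValRat q r, by linarith⟩
    have hle := Int.le_of_dvd (by exact_mod_cast Nat.sub_pos_of_lt hp1) hdvdP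
    have : (p : ℕ) ≤ (p : ℕ) - 1 := by exact_mod_cast hle
    omega
  have hirr : Irreducible (X ^ (p : ℕ) - C qF) := X_pow_sub_C_irreducible_of_prime hp hnotpow
  have hz0 : z ≠ 0 := by
    intro h0
    rw [h0, zero_pow hp.ne_zero] at hz
    exact (map_ne_zero_iff _ (algebraMap F E).injective).mpr hqF0 hz.symm
  have hzq : z ^ (p : ℕ) = algebraMap F E qF := hz
  have haeval : Polynomial.aeval z (X ^ (p : ℕ) - C qF) = 0 := by
    rw [map_sub, map_pow, Polynomial.aeval_X, Polynomial.aeval_C, hzq, sub_self]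
  have hmonic : (X ^ (p : ℕ) - C qF).Monic := monic_X_pow_sub_C qF hp.ne_zero
  have hzint : IsIntegral F z := ⟨X ^ (p : ℕ) - C qF, hmonic, haeval⟩
  haveI := IntermediateField.adjoin.finiteDimensional hzint
  set pb := IntermediateField.adjoin.powerBasis hzint with hpb
  have hgen : pb.gen = IntermediateField.AdjoinSimple.gen F z :=
    IntermediateField.adjoin.powerBasis_gen hzint
  have hminz : minpoly F z = X ^ (p : ℕ) - C qF :=
    (minpoly.eq_of_irreducible_of_monic hirr haeval hmonic).symm
  have hminpb : minpoly F pb.gen = X ^ (p : ℕ) - C qF := by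
    rw [hgen, IntermediateField.minpoly_gen, hminz]
  have hdim : pb.dim = (p : ℕ) := by
    rw [hpb, IntermediateField.adjoin.powerBasis_dim, hminz, natDegree_X_pow_sub_C]
  obtain ⟨g, hgdeg, hgk⟩ := pb.exists_eq_aeval k
  rw [hdim] at hgdeg
  set ι : F →+* E := algebraMap F E with hι
  have hιinj : Function.Injective ι := ι.injective
  have hζE : IsPrimitiveRoot (ι ζ) (p : ℕ) := hζ.map_of_injective hιinj
  -- the norm as a product over the roots
  have hnorm := Algebra.norm_eq_prod_embeddings F E k
  rw [hk] at hnorm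
  have haroots : (minpoly F pb.gen).aroots E
      = ((Finset.range (p : ℕ)).val.map fun i => (ι ζ) ^ i * z) := by
    rw [hminpb]
    show ((X ^ (p : ℕ) - C qF).map ι).roots = _
    have hmapeq : (X ^ (p : ℕ) - C qF).map ι = X ^ (p : ℕ) - C (ι qF) := by
      rw [Polynomial.map_sub, Polynomial.map_pow, Polynomial.map_X, Polynomial.map_C]
    rw [hmapeq, X_pow_sub_C_eq_prod hζE p.pos hzq]
    have : (∏ i ∈ Finset.range (p : ℕ), (X - C ((ι ζ) ^ i * z)))
        = (Multiset.map (fun a => X - C a)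
          ((Finset.range (p : ℕ)).val.map fun i => (ι ζ) ^ i * z)).prod := by
      rw [Multiset.map_map]
      rfl
    rw [this, Polynomial.roots_multiset_prod_X_sub_C]
  have hnodup : (((Finset.range (p : ℕ)).val.map fun i => (ι ζ) ^ i * z)).Nodup := by
    apply Multiset.Nodup.map_on _ (Finset.range (p : ℕ)).nodup
    intro i hi j hj hij
    have hij' : (ι ζ) ^ i = (ι ζ) ^ j := mul_right_cancel₀ hz0 hij
    exact hζE.pow_inj (Finset.mem_range.mp (Finset.mem_val.mp hi))
      (Finset.mem_range.mp (Finset.mem_val.mp hj)) hij'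
  have hprod : (∏ σ : F⟮z⟯ →ₐ[F] E, σ k)
      = ∏ i ∈ Finset.range (p : ℕ), Polynomial.aeval ((ι ζ) ^ i * z) g := by
    have h1 : ∀ σ : F⟮z⟯ →ₐ[F] E, σ k = Polynomial.aeval (σ pb.gen) g := by
      intro σ
      rw [hgk, Polynomial.aeval_algHom_apply]
    calc (∏ σ : F⟮z⟯ →ₐ[F] E, σ k)
        = ∏ σ : F⟮z⟯ →ₐ[F] E, Polynomial.aeval (σ pb.gen) g :=
          Finset.prod_congr rfl fun σ _ => h1 σ
      _ = ∏ y : {y // y ∈ (minpoly F pb.gen).aroots E}, Polynomial.aeval (y : E) g := by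
          refine Fintype.prod_equiv pb.liftEquiv' _ _ fun σ => ?_
          rw [PowerBasis.liftEquiv'_apply_coe]
      _ = ∏ y ∈ ((minpoly F pb.gen).aroots E).toFinset, Polynomial.aeval y g :=
          Finset.prod_mem_multiset _ _ _ fun _ => rfl
      _ = ∏ i ∈ Finset.range (p : ℕ), Polynomial.aeval ((ι ζ) ^ i * z) g := by
          rw [Finset.prod_eq_multiset_prod, haroots, Multiset.toFinset_val,
            Multiset.dedup_eq_self.mpr hnodup, Multiset.map_map,
            Finset.prod_eq_multiset_prod]
          rfl
  have hq_prod : ι ζ = ∏ i ∈ Finset.range (p : ℕ), Polynomial.aeval ((ι ζ) ^ i * z) g := by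
    rw [← hprod, ← hnorm]
  set Q : F[X] := ∏ i ∈ Finset.range (p : ℕ), g.comp (C (ζ ^ i) * X) with hQ
  have hQmap : Q.map ι = ∏ i ∈ Finset.range (p : ℕ), (g.map ι).comp (C ((ι ζ) ^ i) * X) := by
    rw [hQ, Polynomial.map_prod]
    refine Finset.prod_congr rfl fun i _ => ?_
    rw [Polynomial.map_comp, Polynomial.map_mul, Polynomial.map_C, Polynomial.map_X, map_pow]
  have hevalQ : Polynomial.eval z (Q.map ι)
      = ∏ i ∈ Finset.range (p : ℕ), Polynomial.aeval ((ι ζ) ^ i * z) g := by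
    rw [hQmap, Polynomial.eval_prod]
    refine Finset.prod_congr rfl fun i _ => ?_
    rw [Polynomial.eval_comp]
    simp only [Polynomial.eval_mul, Polynomial.eval_C, Polynomial.eval_X]
    rw [Polynomial.eval_map, Polynomial.aeval_def, hι]
  set N := Q.natDegree with hN
  set S := (Finset.range (N + 1)).filter (fun n => (p : ℕ) ∣ n) with hS
  have hζ1 : ζ ≠ 1 := hζ.ne_one hp1
  have hζp : ζ ^ (p : ℕ) = 1 := hζ.pow_eq_one
  have hcoeffz : ∀ n : ℕ, ¬ (p : ℕ) ∣ n → Q.coeff n = 0 := by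
    intro n hn
    rw [hQ]
    exact my_coeff_eq_zero hp hζ1 hζp g hn
  have hkey : ζ = ∑ n ∈ S, Q.coeff n * qF ^ (n / (p : ℕ)) := by
    apply hιinj
    rw [map_sum]
    have hdeg2 : (Q.map ι).natDegree < N + 1 :=
      lt_of_le_of_lt Polynomial.natDegree_map_le (Nat.lt_succ_self N)
    have h3 : ι ζ = ∑ n ∈ Finset.range (N + 1), (Q.map ι).coeff n * z ^ n := by
      rw [← Polynomial.eval_eq_sum_range' hdeg2, hevalQ]
      exact hq_prod
    rw [h3]
    have h4 : ∑ n ∈ S, (Q.map ι).coeff n * z ^ n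
        = ∑ n ∈ Finset.range (N + 1), (Q.map ι).coeff n * z ^ n := by
      rw [hS]
      apply Finset.sum_filter_of_ne
      intro n _ hne
      by_contra hnd
      apply hne
      rw [Polynomial.coeff_map, hcoeffz n hnd, map_zero, zero_mul]
    rw [← h4]
    refine Finset.sum_congr rfl fun n hn => ?_
    have hdvd : (p : ℕ) ∣ n := (Finset.mem_filter.mp hn).2
    have hzn : z ^ n = (ι qF) ^ (n / (p : ℕ)) := by
      conv_lhs => rw [← Nat.mul_div_cancel' hdvd]
      rw [pow_mul, hzq]
    rw [Polynomial.coeff_map, hzn, map_mul, map_pow]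
  -- move everything to ℚ_[q]
  set φ : F →ₐ[ℚ] ℚ_[q] :=
    (hζ.embeddingsEquivPrimitiveRoots ℚ_[q]
      (Polynomial.cyclotomic.irreducible_rat p.pos)).symm
      ⟨w₀, (mem_primitiveRoots p.pos).mpr hw₀⟩ with hφ
  have hφinj : Function.Injective φ := φ.toRingHom.injective
  set w : ℚ_[q] := φ ζ with hw
  have hwprim : IsPrimitiveRoot w (p : ℕ) := hζ.map_of_injective hφinj
  have hφq : φ qF = (q : ℚ_[q]) := by
    rw [hqF, AlgHom.commutes]
    exact map_natCast (algebraMap ℚ ℚ_[q]) q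
  set gq := g.map φ.toRingHom with hgq
  have hQmapφ : Q.map φ.toRingHom
      = ∏ i ∈ Finset.range (p : ℕ), gq.comp (C (w ^ i) * X) := by
    rw [hQ, Polynomial.map_prod]
    refine Finset.prod_congr rfl fun i _ => ?_
    rw [Polynomial.map_comp, Polynomial.map_mul, Polynomial.map_C, Polynomial.map_X, map_pow]
    rfl
  have hdegq : gq.natDegree < (p : ℕ) :=
    lt_of_le_of_lt Polynomial.natDegree_map_le hgdeg
  have hmem : ∀ n : ℕ,
      (∏ i ∈ Finset.range (p : ℕ), gq.comp (C (w ^ i) * X)).coeff n ≠ 0 → n ∈ S := by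
    intro n hne
    rw [← hQmapφ, Polynomial.coeff_map] at hne
    have hQn : Q.coeff n ≠ 0 := fun h => hne (by rw [h, map_zero])
    have hdvd : (p : ℕ) ∣ n := by
      by_contra hnd
      exact hQn (hcoeffz n hnd)
    have hle : n ≤ N := Polynomial.le_natDegree_of_ne_zero hQn
    rw [hS]
    exact Finset.mem_filter.mpr ⟨Finset.mem_range.mpr (by omega), hdvd⟩
  have hsumq : ∑ n ∈ S, (∏ i ∈ Finset.range (p : ℕ), gq.comp (C (w ^ i) * X)).coeff n
      * (q : ℚ_[q]) ^ (n / (p : ℕ)) = w := by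
    rw [← hQmapφ]
    have h5 : ∀ n ∈ S, (Q.map φ.toRingHom).coeff n * (q : ℚ_[q]) ^ (n / (p : ℕ))
        = φ (Q.coeff n * qF ^ (n / (p : ℕ))) := by
      intro n _
      rw [Polynomial.coeff_map, map_mul, map_pow, hφq]
      rfl
    rw [Finset.sum_congr rfl h5, ← map_sum, hw, hkey]
  have hqP : q ≠ (p : ℕ) := by omega
  exact my_local_key hp hodd hqP hqd2 (hwprim.ne_one hp1) hwprim.pow_eq_one
    gq hdegq S hmem hsumq
end

section
/- Let G be a finite group, F a field whose characteristic does not divide |G|, and let α ∈ Z^2(G, F^*). Then the twisted group algebra F^α G admits a commutative Wedderburn component if and only if the class [α] lies in the image of the inflation map from Ext(G/G', F^*) to H^2(G, F^*). -/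
/-- A (trivial-action) multiplicative 2-cocycle. -/
def IsTwoCocycle' {G M : Type*} [Group G] [CommMonoid M] (α : G → G → M) : Prop :=
  ∀ g h k : G, α g h * α (g * h) k = α h k * α g (h * k)

open scoped commutatorElement

section Aux

lemma cocycle_one_left' {G M : Type*} [Group G] [CommGroup M] {α : G → G → M}
    (hα : IsTwoCocycle' α) (g : G) : α 1 g = α 1 1 := by
  have h := hα 1 1 g
  rw [one_mul, one_mul] at h
  exact (mul_right_cancel h).symm

lemma cocycle_one_right' {G M : Type*} [Group G] [CommGroup M] {α : G → G → M}
    (hα : IsTwoCocycle' α) (g : G) : α g 1 = α 1 1 := by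
  have h := hα g 1 1
  rw [mul_one, one_mul] at h
  exact mul_right_cancel h

lemma smul_cancel_ne {F A : Type*} [Field F] [AddCommGroup A] [Module F A]
    {c : F} (hc : c ≠ 0) {x : A} (h : c • x = 0) : x = 0 := by
  have : c⁻¹ • (c • x) = 0 := by rw [h, smul_zero]
  rwa [smul_smul, inv_mul_cancel₀ hc, one_smul] at this

lemma smul_cancel_eq {F A : Type*} [Field F] [AddCommGroup A] [Module F A]
    {x : A} (hx : x ≠ 0) {a b : F} (h : a • x = b • x) : a = b := by
  by_contra hne
  have h1 : (a - b) • x = 0 := by rw [sub_smul, h, sub_self]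
  exact hx (smul_cancel_ne (sub_ne_zero.mpr hne) h1)

lemma corner_mul {A : Type*} [Ring A] {e : A} (hee : e * e = e)
    (hc : ∀ b : A, b * e = e * b) (x y : A) : (e * x) * (e * y) = e * (x * y) := by
  rw [mul_assoc, ← mul_assoc x e y, hc x, mul_assoc e x y, ← mul_assoc, hee]

lemma u_one_eq {G F A : Type*} [Group G] [Field F] [Ring A] [Algebra F A]
    {α : G → G → Fˣ} (hα : IsTwoCocycle' α) (u : Module.Basis G F A)
    (hu : ∀ x y : G, u x * u y = (α x y : F) • u (x * y)) :
    u 1 = (α 1 1 : F) • 1 := by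
  have h1 : ∀ g : G, (((α 1 1 : F))⁻¹ • u 1) * u g = u g := by
    intro g
    rw [smul_mul_assoc, hu, show ((α 1 g : Fˣ) : F) = ((α 1 1 : Fˣ) : F) from
      congrArg _ (cocycle_one_left' hα g), smul_smul, inv_mul_cancel₀ (α 1 1).ne_zero,
      one_smul, one_mul]
  have h2 : LinearMap.mulLeft F (((α 1 1 : F))⁻¹ • u 1) = LinearMap.id :=
    u.ext fun g => by simpa [LinearMap.mulLeft_apply] using h1 g
  have h3 := LinearMap.congr_fun h2 1
  simp only [LinearMap.mulLeft_apply, LinearMap.id_apply, mul_one] at h3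
  calc u 1 = (α 1 1 : F) • (((α 1 1 : F))⁻¹ • u 1) := by
        rw [smul_smul, mul_inv_cancel₀ (α 1 1).ne_zero, one_smul]
  _ = (α 1 1 : F) • 1 := by rw [h3]

end Aux

section Forward

theorem forward_dir {G F A : Type*} [Group G] [Field F] [Ring A] [Algebra F A]
    {α : G → G → Fˣ} (hα : IsTwoCocycle' α) (u : Module.Basis G F A)
    (hu : ∀ x y : G, u x * u y = (α x y : F) • u (x * y))
    (e : A) (he0 : e ≠ 0) (hee : IsIdempotentElem e) (hec : e ∈ Subalgebra.center F A)
    (hcm : ∀ x y : A, (e * x) * (e * y) = (e * y) * (e * x)) :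
    ∃ β : Abelianization G → Abelianization G → Fˣ, IsTwoCocycle' β ∧
      (∀ x y, β x y = β y x) ∧
      ∃ μ : G → Fˣ, ∀ g h : G,
        α g h = β (Abelianization.of g) (Abelianization.of h) *
          (μ g * μ h * (μ (g * h))⁻¹) := by
  classical
  have hc : ∀ b : A, b * e = e * b := Subalgebra.mem_center_iff.mp hec
  set v : G → A := fun g => e * u g with hvdef
  have hmul : ∀ g h : G, v g * v h = (α g h : F) • v (g * h) := by
    intro g h
    show (e * u g) * (e * u h) = (α g h : F) • (e * u (g * h))
    rw [corner_mul hee.eq hc, hu, mul_smul_comm]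
  have hv1 : v 1 = (α 1 1 : F) • e := by
    show e * u 1 = _
    rw [u_one_eq hα u hu, mul_smul_comm, mul_one]
  have hvne : ∀ g, v g ≠ 0 := by
    intro g hg
    have h1 := hmul g g⁻¹
    rw [hg, zero_mul, mul_inv_cancel, hv1, smul_smul] at h1
    exact he0 (smul_cancel_ne (mul_ne_zero (α g g⁻¹).ne_zero (α 1 1).ne_zero) h1.symm)
  set Rel : G → G → Prop := fun x y => ∃ c : F, c ≠ 0 ∧ v x = c • v y with hRel
  have rel_refl : ∀ x, Rel x x := fun x => ⟨1, one_ne_zero, (one_smul F _).symm⟩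
  have rel_symm : ∀ {x y}, Rel x y → Rel y x := by
    rintro x y ⟨c, hc0, h⟩
    exact ⟨c⁻¹, inv_ne_zero hc0, by rw [h, smul_smul, inv_mul_cancel₀ hc0, one_smul]⟩
  have rel_trans : ∀ {x y z}, Rel x y → Rel y z → Rel x z := by
    rintro x y z ⟨c, hc0, h1⟩ ⟨d, hd0, h2⟩
    exact ⟨c * d, mul_ne_zero hc0 hd0, by rw [h1, h2, smul_smul]⟩
  have rel_mulr : ∀ {x y : G} (z : G), Rel x y → Rel (x * z) (y * z) := by
    rintro x y z ⟨c, hc0, h⟩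
    refine ⟨(α x z : F)⁻¹ * (c * (α y z : F)),
      mul_ne_zero (inv_ne_zero (α x z).ne_zero) (mul_ne_zero hc0 (α y z).ne_zero), ?_⟩
    have h1 := hmul x z
    have h2 := hmul y z
    calc v (x * z) = (α x z : F)⁻¹ • (v x * v z) := by
          rw [h1, smul_smul, inv_mul_cancel₀ (α x z).ne_zero, one_smul]
    _ = (α x z : F)⁻¹ • (c • (v y * v z)) := by rw [h, smul_mul_assoc]
    _ = _ := by rw [h2, smul_smul, smul_smul, mul_assoc]
  have rel_comm : ∀ g h : G, Rel (g * h) (h * g) := by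
    intro g h
    refine ⟨(α g h : F)⁻¹ * (α h g : F),
      mul_ne_zero (inv_ne_zero (α g h).ne_zero) (α h g).ne_zero, ?_⟩
    have h1 : v g * v h = v h * v g := hcm (u g) (u h)
    rw [hmul, hmul] at h1
    calc v (g * h) = (α g h : F)⁻¹ • ((α g h : F) • v (g * h)) := by
          rw [smul_smul, inv_mul_cancel₀ (α g h).ne_zero, one_smul]
    _ = (α g h : F)⁻¹ • ((α h g : F) • v (h * g)) := by rw [h1]
    _ = _ := by rw [smul_smul]
  have hG' : ∀ k ∈ commutator G, Rel k 1 := by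
    intro k hk
    rw [commutator_eq_closure] at hk
    induction hk using Subgroup.closure_induction with
    | mem x hx =>
      obtain ⟨g, h, rfl⟩ := hx
      have h1 : Rel ((g * h) * (g⁻¹ * h⁻¹)) ((h * g) * (g⁻¹ * h⁻¹)) :=
        rel_mulr _ (rel_comm g h)
      have e1 : (g * h) * (g⁻¹ * h⁻¹) = ⁅g, h⁆ := by group
      have e2 : (h * g) * (g⁻¹ * h⁻¹) = 1 := by group
      rwa [e1, e2] at h1
    | one => exact rel_refl 1
    | mul x y hx hy ihx ihy =>
      have h1 := rel_mulr y ihx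
      rw [one_mul] at h1
      exact rel_trans h1 ihy
    | inv x hx ihx =>
      have h1 := rel_mulr x⁻¹ (rel_symm ihx)
      rwa [one_mul, mul_inv_cancel] at h1
  set s : Abelianization G → G := fun q => Quotient.out q with hsdef
  have hs : ∀ q, Abelianization.of (s q) = q := fun q => QuotientGroup.out_eq' q
  set σ : G → G := fun g => s (Abelianization.of g) with hσdef
  have hσg : ∀ g : G, ∃ c : F, c ≠ 0 ∧ v g = c • v (σ g) := by
    intro g
    have hk : (σ g)⁻¹ * g ∈ commutator G := by
      have h1 : Abelianization.of ((σ g)⁻¹ * g) = 1 := by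
        rw [map_mul, map_inv, hs, inv_mul_cancel]
      exact (QuotientGroup.eq_one_iff _).mp h1
    obtain ⟨c, hc0, hck⟩ := hG' _ hk
    have h2 := hmul (σ g) ((σ g)⁻¹ * g)
    have e1 : σ g * ((σ g)⁻¹ * g) = g := by group
    rw [e1, hck, hv1] at h2
    -- h2 : v (σ g) * (c • ((α 1 1 : F) • e)) = (α (σ g) ((σ g)⁻¹ * g) : F) • v g
    have h3 : v (σ g) * e = v (σ g) := by
      show (e * u (σ g)) * e = e * u (σ g)
      rw [mul_assoc, hc (u (σ g)), ← mul_assoc, hee.eq]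
    have h4 : v (σ g) * (c • ((α 1 1 : F) • e)) = (c * (α 1 1 : F)) • v (σ g) := by
      rw [smul_smul, mul_smul_comm, h3]
    rw [h4] at h2
    refine ⟨(α (σ g) ((σ g)⁻¹ * g) : F)⁻¹ * (c * (α 1 1 : F)),
      mul_ne_zero (inv_ne_zero (α _ _).ne_zero) (mul_ne_zero hc0 (α 1 1).ne_zero), ?_⟩
    calc v g = (α (σ g) ((σ g)⁻¹ * g) : F)⁻¹ • ((α (σ g) ((σ g)⁻¹ * g) : F) • v g) := by
          rw [smul_smul, inv_mul_cancel₀ (α _ _).ne_zero, one_smul]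
    _ = (α (σ g) ((σ g)⁻¹ * g) : F)⁻¹ • ((c * (α 1 1 : F)) • v (σ g)) := by rw [← h2]
    _ = _ := by rw [smul_smul]
  choose t ht0 htv using hσg
  set B : Abelianization G → Abelianization G → F :=
    fun x y => (α (s x) (s y) : F) * t (s x * s y) with hBdef
  have hB0 : ∀ x y, B x y ≠ 0 := fun x y => mul_ne_zero (α _ _).ne_zero (ht0 _)
  have hσs : ∀ x y : Abelianization G, σ (s x * s y) = s (x * y) := by
    intro x y
    show s (Abelianization.of (s x * s y)) = _
    rw [map_mul, hs, hs]
  have key : ∀ x y, v (s x) * v (s y) = B x y • v (s (x * y)) := by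
    intro x y
    rw [hmul, htv (s x * s y), hσs, smul_smul]
  have cancel : ∀ (gg : G) {a b : F}, a • v gg = b • v gg → a = b := by
    intro gg a b h
    exact smul_cancel_eq (hvne gg) h
  have hBco : ∀ x y z, B x y * B (x * y) z = B y z * B x (y * z) := by
    intro x y z
    refine cancel (s (x * y * z)) ?_
    have lhs : (v (s x) * v (s y)) * v (s z) = (B x y * B (x * y) z) • v (s (x * y * z)) := by
      rw [key, smul_mul_assoc, key, smul_smul]
    have rhs : v (s x) * (v (s y) * v (s z)) = (B y z * B x (y * z)) • v (s (x * y * z)) := by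
      rw [key, mul_smul_comm, key, smul_smul, ← mul_assoc x y z]
    exact (lhs.symm.trans (mul_assoc _ _ _)).trans rhs
  have hBsymm : ∀ x y, B x y = B y x := by
    intro x y
    refine cancel (s (x * y)) ?_
    have h1 : v (s x) * v (s y) = v (s y) * v (s x) := hcm (u (s x)) (u (s y))
    rw [key, key, mul_comm y x] at h1
    exact h1
  have hrel : ∀ g h : G,
      (α g h : F) * t (g * h) = t g * t h * B (Abelianization.of g) (Abelianization.of h) := by
    intro g h
    refine cancel (s (Abelianization.of g * Abelianization.of h)) ?_
    have h1 : v g * v h = ((α g h : F) * t (g * h)) •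
        v (s (Abelianization.of g * Abelianization.of h)) := by
      rw [hmul, htv (g * h), smul_smul]
      congr 2
    have h2 : v g * v h = (t g * t h * B (Abelianization.of g) (Abelianization.of h)) •
        v (s (Abelianization.of g * Abelianization.of h)) := by
      rw [htv g, htv h, smul_mul_assoc, mul_smul_comm, key, smul_smul, smul_smul, mul_assoc]
    exact h1.symm.trans h2
  refine ⟨fun x y => Units.mk0 (B x y) (hB0 x y), ?_, ?_,
    fun g => Units.mk0 (t g) (ht0 g), ?_⟩
  · intro x y z
    exact Units.ext (by simpa only [Units.val_mul, Units.val_mk0] using hBco x y z)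
  · intro x y
    exact Units.ext (hBsymm x y)
  · intro g h
    refine Units.ext ?_
    simp only [Units.val_mul, Units.val_mk0, Units.val_inv_eq_inv_val]
    have h1 := hrel g h
    simp only [hBdef] at h1 ⊢
    field_simp [ht0 (g * h)]
    linear_combination h1

end Forward

section Reverse

theorem reverse_dir {G F A : Type*} [Group G] [Fintype G] [Field F] [Ring A] [Algebra F A]
    (hchar : (Fintype.card G : F) ≠ 0)
    {α : G → G → Fˣ} (u : Module.Basis G F A)
    (hu : ∀ x y : G, u x * u y = (α x y : F) • u (x * y))
    (β : Abelianization G → Abelianization G → Fˣ) (hβ : IsTwoCocycle' β)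
    (hβs : ∀ x y, β x y = β y x) (μ : G → Fˣ)
    (hrel : ∀ g h : G, α g h = β (Abelianization.of g) (Abelianization.of h) *
      (μ g * μ h * (μ (g * h))⁻¹)) :
    ∃ e : A, e ≠ 0 ∧ IsIdempotentElem e ∧ e ∈ Subalgebra.center F A ∧
      ∀ x y : A, (e * x) * (e * y) = (e * y) * (e * x) := by
  classical
  set H : Subgroup G := commutator G with hH
  letI : Fintype ↥H := Fintype.ofFinite _
  set w : G → A := fun g => ((μ g : F))⁻¹ • u g with hwdef
  have hwu : ∀ g : G, u g = (μ g : F) • w g := by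
    intro g
    rw [hwdef]
    show u g = (μ g : F) • (((μ g : F))⁻¹ • u g)
    rw [smul_smul, mul_inv_cancel₀ (μ g).ne_zero, one_smul]
  have hw : ∀ g h : G, w g * w h =
      (β (Abelianization.of g) (Abelianization.of h) : F) • w (g * h) := by
    intro g h
    have hα' : (α g h : F) = (β (Abelianization.of g) (Abelianization.of h) : F) *
        ((μ g : F) * (μ h : F) * ((μ (g * h) : F))⁻¹) := by
      rw [hrel g h]
      simp [Units.val_mul]
    show ((μ g : F))⁻¹ • u g * (((μ h : F))⁻¹ • u h) = _ • (((μ (g * h) : F))⁻¹ • u (g * h))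
    rw [smul_mul_assoc, mul_smul_comm, hu, hα', smul_smul, smul_smul, smul_smul]
    congr 1
    have h1 := (μ g).ne_zero
    have h2 := (μ h).ne_zero
    have h3 := (μ (g * h)).ne_zero
    field_simp
  have hof : ∀ k ∈ H, Abelianization.of k = 1 := fun k hk =>
    (QuotientGroup.eq_one_iff k).mpr hk
  set b : Fˣ := β 1 1 with hb
  have hβleft : ∀ x, β 1 x = b := fun x => cocycle_one_left' hβ x
  have hβright : ∀ x, β x 1 = b := fun x => cocycle_one_right' hβ x
  set S : A := ∑ k : ↥H, w (k : G) with hS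
  have hwS : ∀ l : ↥H, w (l : G) * S = (b : F) • S := by
    intro l
    rw [hS, Finset.mul_sum]
    have h1 : ∀ k : ↥H, w (l : G) * w (k : G) = (b : F) • w (((l * k : ↥H) : G)) := by
      intro k
      rw [hw, hof _ l.2, hβleft]
      rfl
    rw [Finset.sum_congr rfl fun k _ => h1 k, ← Finset.smul_sum]
    congr 1
    exact Fintype.sum_equiv (Equiv.mulLeft l) _ _ (fun k => rfl)
  have hSw : ∀ l : ↥H, S * w (l : G) = (b : F) • S := by
    intro l
    rw [hS, Finset.sum_mul]
    have h1 : ∀ k : ↥H, w (k : G) * w (l : G) = (b : F) • w (((k * l : ↥H) : G)) := by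
      intro k
      rw [hw, hof _ l.2, hβright]
      rfl
    rw [Finset.sum_congr rfl fun k _ => h1 k, ← Finset.smul_sum]
    congr 1
    exact Fintype.sum_equiv (Equiv.mulRight l) _ _ (fun k => rfl)
  have hcard : (Fintype.card ↥H : F) ≠ 0 := by
    obtain ⟨m, hm⟩ := Subgroup.card_subgroup_dvd_card H
    intro h0
    apply hchar
    rw [← Nat.card_eq_fintype_card (α := G), hm, Nat.cast_mul,
      Nat.card_eq_fintype_card, h0, zero_mul]
  have hc0 : ((Fintype.card ↥H : F) * (b : F))⁻¹ ≠ 0 :=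
    inv_ne_zero (mul_ne_zero hcard b.ne_zero)
  set c : F := ((Fintype.card ↥H : F) * (b : F))⁻¹ with hcdef
  set e : A := c • S with he
  have hS0 : S ≠ 0 := by
    intro h0
    have li : LinearIndependent F (fun k : ↥H => u (k : G)) :=
      u.linearIndependent.comp _ Subtype.coe_injective
    have h2 : ∀ k : ↥H, ((μ ((k : G)) : F))⁻¹ = 0 := by
      intro k
      exact Fintype.linearIndependent_iff.mp li (fun k => ((μ ((k : G)) : F))⁻¹) h0 k
    exact inv_ne_zero (μ ((1 : ↥H) : G)).ne_zero (h2 1)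
  have he0 : e ≠ 0 := fun h => hS0 (smul_cancel_ne hc0 h)
  have hee : IsIdempotentElem e := by
    show e * e = e
    calc e * e = (c * c) • (∑ l : ↥H, w (l : G) * S) := by
          rw [he, smul_mul_assoc, mul_smul_comm, smul_smul, hS, Finset.sum_mul]
    _ = (c * c) • ∑ _l : ↥H, (b : F) • S := by
          rw [Finset.sum_congr rfl fun l _ => hwS l]
    _ = (c * c * ((Fintype.card ↥H : F) * (b : F))) • S := by
          rw [Finset.sum_const, Finset.card_univ, ← Nat.cast_smul_eq_nsmul F,
            smul_smul, smul_smul, mul_assoc]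
    _ = c • S := by
          congr 1
          rw [hcdef]
          field_simp
    _ = e := rfl
  have hwgS : ∀ g : G, w g * S = S * w g := by
    intro g
    have h1 : ∀ k : ↥H, w g * w (k : G) = (b : F) • w (g * (k : G)) := fun k => by
      rw [hw, hof _ k.2, hβright]
    have h2 : ∀ k : ↥H, w (k : G) * w g = (b : F) • w ((k : G) * g) := fun k => by
      rw [hw, hof _ k.2, hβleft]
    rw [hS, Finset.mul_sum, Finset.sum_mul,
      Finset.sum_congr rfl fun k _ => h1 k, Finset.sum_congr rfl fun k _ => h2 k,
      ← Finset.smul_sum, ← Finset.smul_sum]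
    congr 1
    have hN : H.Normal := by rw [hH]; infer_instance
    have hmem1 : ∀ k : ↥H, g * (k : G) * g⁻¹ ∈ H := fun k => hN.conj_mem _ k.2 g
    have hmem2 : ∀ k : ↥H, g⁻¹ * (k : G) * g ∈ H := fun k => by
      simpa using hN.conj_mem _ k.2 g⁻¹
    let E : ↥H ≃ ↥H :=
      { toFun := fun k => ⟨g * (k : G) * g⁻¹, hmem1 k⟩
        invFun := fun k => ⟨g⁻¹ * (k : G) * g, hmem2 k⟩
        left_inv := fun k => Subtype.ext (by group)
        right_inv := fun k => Subtype.ext (by group) }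
    refine Fintype.sum_equiv E _ _ ?_
    intro k
    show w (g * (k : G)) = w (((E k : ↥H) : G) * g)
    have hEk : ((E k : ↥H) : G) = g * (k : G) * g⁻¹ := rfl
    rw [hEk]
    congr 1
    group
  have hue : ∀ g : G, u g * e = e * u g := by
    intro g
    have h2 : w g * e = e * w g := by
      rw [he, mul_smul_comm c (w g) S, smul_mul_assoc c S (w g), hwgS g]
    have h3 : u g * e = (μ g : F) • (w g * e) := by
      rw [hwu g, smul_mul_assoc]
    have h4 : e * u g = (μ g : F) • (e * w g) := by
      rw [hwu g, mul_smul_comm]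
    rw [h3, h4, h2]
  have hcen : e ∈ Subalgebra.center F A := by
    rw [Subalgebra.mem_center_iff]
    intro a
    have h2 : LinearMap.mulRight F e = LinearMap.mulLeft F e :=
      u.ext fun g => by simpa using hue g
    simpa using LinearMap.congr_fun h2 a
  have hcansm : ∀ b : A, b * e = e * b := Subalgebra.mem_center_iff.mp hcen
  -- the key basis computation
  have hek : ∀ k : ↥H, e * w (k : G) = (b : F) • e := by
    intro k
    rw [he, smul_mul_assoc, hSw k, smul_smul, mul_comm c, ← smul_smul]
  have h2 : ∀ g h : G, e * (u g * u h) = e * (u h * u g) := by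
    intro g h
    have hew : e * w (h * g) = e * w (g * h) := by
      have hkH : (h * g) * (g * h)⁻¹ ∈ H := by
        have hcomm : (h * g) * (g * h)⁻¹ = ⁅h, g⁆ := by group
        rw [hcomm, hH, commutator_def]
        exact Subgroup.commutator_mem_commutator (Subgroup.mem_top h) (Subgroup.mem_top g)
      have h3 : w ((h * g) * (g * h)⁻¹) * w (g * h) = (b : F) • w (h * g) := by
        rw [hw, hof _ hkH, hβleft]
        congr 2
        group
      calc e * w (h * g) = e * ((b : F)⁻¹ • (w ((h * g) * (g * h)⁻¹) * w (g * h))) := by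
            rw [h3, smul_smul, inv_mul_cancel₀ b.ne_zero, one_smul]
      _ = (b : F)⁻¹ • ((e * w ((h * g) * (g * h)⁻¹)) * w (g * h)) := by
            rw [mul_smul_comm]
            congr 1
            rw [← mul_assoc]
      _ = (b : F)⁻¹ • (((b : F) • e) * w (g * h)) := by rw [hek ⟨_, hkH⟩]
      _ = e * w (g * h) := by
            rw [smul_mul_assoc, smul_smul, inv_mul_cancel₀ b.ne_zero, one_smul]
    have keyU : α g h * μ (g * h) = α h g * μ (h * g) := by
      rw [hrel g h, hrel h g, hβs (Abelianization.of h) (Abelianization.of g),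
        mul_comm (μ h) (μ g)]
      group
    have keyF : (α g h : F) * (μ (g * h) : F) = (α h g : F) * (μ (h * g) : F) := by
      have := congrArg Units.val keyU
      simpa [Units.val_mul] using this
    have E1 : e * (u g * u h) = ((α g h : F) * (μ (g * h) : F)) • (e * w (g * h)) := by
      rw [hu, mul_smul_comm, hwu (g * h), mul_smul_comm, smul_smul]
    have E2 : e * (u h * u g) = ((α h g : F) * (μ (h * g) : F)) • (e * w (h * g)) := by
      rw [hu, mul_smul_comm, hwu (h * g), mul_smul_comm, smul_smul]
    rw [E1, E2, hew, keyF]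
  have hcomm2 : ∀ x y : A, e * (x * y) = e * (y * x) := by
    have hT : ((LinearMap.mul F A) - (LinearMap.mul F A).flip).compr₂
        (LinearMap.mulLeft F e) = 0 := by
      refine u.ext fun g => u.ext fun h => ?_
      simp only [LinearMap.compr₂_apply, LinearMap.sub_apply, LinearMap.flip_apply,
        LinearMap.mul_apply', LinearMap.mulLeft_apply, LinearMap.zero_apply, mul_sub,
        sub_eq_zero]
      exact h2 g h
    intro x y
    have h3 := LinearMap.congr_fun (LinearMap.congr_fun hT x) y
    simpa only [LinearMap.compr₂_apply, LinearMap.sub_apply, LinearMap.flip_apply,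
      LinearMap.mul_apply', LinearMap.mulLeft_apply, LinearMap.zero_apply, mul_sub,
      sub_eq_zero] using h3
  refine ⟨e, he0, hee, hcen, fun x y => ?_⟩
  rw [corner_mul hee.eq hcansm, corner_mul hee.eq hcansm, hcomm2]

end Reverse

/-- Let `G` be a finite group, `F` a field whose characteristic does not divide `|G|`, and
`α` a 2-cocycle on `G` with values in `Fˣ`.  The twisted group algebra `F^α G` admits a
commutative Wedderburn component (equivalently: there is a nonzero central idempotent whose
corner is commutative) if and only if `[α]` lies in the image of the inflation map from
`Ext(G/G', Fˣ)`, i.e. `α` is cohomologous to a cocycle inflated from a symmetric cocycle on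
the abelianization of `G`. -/
theorem stmt_13 (G : Type*) [Group G] [Fintype G] (F : Type*) [Field F]
    (hchar : (Fintype.card G : F) ≠ 0)
    (α : G → G → Fˣ) (hα : IsTwoCocycle' α)
    (A : Type*) [Ring A] [Algebra F A] (u : Module.Basis G F A)
    (hu : ∀ x y : G, u x * u y = (α x y : F) • u (x * y)) :
    (∃ e : A, e ≠ 0 ∧ IsIdempotentElem e ∧ e ∈ Subalgebra.center F A ∧
        ∀ x y : A, (e * x) * (e * y) = (e * y) * (e * x)) ↔
      (∃ β : Abelianization G → Abelianization G → Fˣ, IsTwoCocycle' β ∧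
        (∀ x y, β x y = β y x) ∧
        ∃ μ : G → Fˣ, ∀ g h : G,
          α g h = β (Abelianization.of g) (Abelianization.of h) *
            (μ g * μ h * (μ (g * h))⁻¹)) := by
  constructor
  · rintro ⟨e, he0, hee, hec, hcm⟩
    exact forward_dir hα u hu e he0 hee hec hcm
  · rintro ⟨β, hβ, hβs, μ, hrel⟩
    exact reverse_dir hchar u hu β hβ hβs μ hrel
end

section
/- Let 1 → A → S → G → 1 be a central extension of finite groups, F a field whose characteristic does not divide |A|, and α ∈ Z^2(S, F^*) inflated from α' ∈ Z^2(G, F^*). Fix a 2-cocycle σ ∈ Z^2(G, A) corresponding to the extension. Then F^α S ≅ ⊕_{χ ∈ Irr(A,F)} F(χ)^{α_χ} G as F-algebras, where for a character χ : A → K^* (K a splitting field of A over F), α_χ(g,h) = α'(g,h)·χ(σ(g,h)) and F(χ) is the field generated over F by the values of χ. -/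
open IntermediateField

/-- The `F`-algebra homomorphism `F[A] → K` induced by a character `χ : A → Kˣ`. -/
noncomputable def liftChar (F : Type*) [Field F] (A : Type*) [CommGroup A]
    (K : Type*) [Field K] [Algebra F K] (χ : A →* Kˣ) :
    MonoidAlgebra F A →ₐ[F] K :=
  MonoidAlgebra.lift F K A ((Units.coeHom K).comp χ)

open MonoidAlgebra in
/-- Transport of a monoid algebra along a ring isomorphism of coefficients and a
monoid isomorphism. -/
noncomputable def monoidAlgebraCongr {k₁ k₂ G₁ G₂ : Type*} [CommSemiring k₁] [CommSemiring k₂]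
    [CommMonoid G₁] [CommMonoid G₂] (e : k₁ ≃+* k₂) (f : G₁ ≃* G₂) :
    MonoidAlgebra k₁ G₁ ≃+* MonoidAlgebra k₂ G₂ :=
  RingEquiv.ofRingHom
    (liftNCRingHom (singleOneRingHom.comp e.toRingHom) ((of k₂ G₂).comp f.toMonoidHom)
      (fun _ _ => Commute.all _ _))
    (liftNCRingHom (singleOneRingHom.comp e.symm.toRingHom) ((of k₁ G₁).comp f.symm.toMonoidHom)
      (fun _ _ => Commute.all _ _))
    (by
      apply MonoidAlgebra.ringHom_ext <;> intro b <;>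
        simp [liftNCRingHom, singleOneRingHom, MonoidAlgebra.single_mul_single])
    (by
      apply MonoidAlgebra.ringHom_ext <;> intro b <;>
        simp [liftNCRingHom, singleOneRingHom, MonoidAlgebra.single_mul_single])

/-- Maschke's theorem for commutative groups, in a universe-polymorphic form. -/
theorem monoidAlgebraSemisimple (F : Type u) [Field F] (A : Type v) [CommGroup A] [Fintype A]
    (h : (Fintype.card A : F) ≠ 0) : IsSemisimpleRing (MonoidAlgebra F A) := by
  haveI : NeZero (Nat.card (ULift.{u} A) : ULift.{v} F) := by
    constructor
    intro h0
    apply h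
    have := congrArg ULift.down h0
    simpa [Nat.card_ulift, Nat.card_eq_fintype_card] using this
  exact (monoidAlgebraCongr (ULift.ringEquiv : ULift.{v} F ≃+* F)
    (MulEquiv.ulift : ULift.{u} A ≃* A)).isSemisimpleRing

theorem auxIntSplit {F K : Type*} [Field F] [Field K] [Algebra F K] {n : ℕ} (hn : n ≠ 0)
    (hXn : Polynomial.Splits ((Polynomial.X ^ n - Polynomial.C (1 : F)).map (algebraMap F K)))
    {E : Type*} [Field E] [Algebra F E] (x : E) (hx : x ^ n = 1) :
    IsIntegral F x ∧ ((minpoly F x).map (algebraMap F K)).Splits := by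
  have hint : IsIntegral F x := by
    refine ⟨Polynomial.X ^ n - Polynomial.C (1 : F), Polynomial.monic_X_pow_sub_C 1 hn, ?_⟩
    simp [hx]
  refine ⟨hint, ?_⟩
  have hdvd : minpoly F x ∣ Polynomial.X ^ n - Polynomial.C (1 : F) := by
    apply minpoly.dvd
    rw [Polynomial.aeval_def]
    simp [hx]
  exact hXn.of_dvd
    (Polynomial.map_ne_zero (Polynomial.monic_X_pow_sub_C (1 : F) hn).ne_zero) (Polynomial.map_dvd _ hdvd)

set_option maxHeartbeats 2000000 in
/-- Let `1 → A → S → G → 1` be a central extension of finite groups, `F` a field whose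
characteristic does not divide `|A|`, and `α ∈ Z²(S, Fˣ)` inflated from `α' ∈ Z²(G, Fˣ)`.
Fix a 2-cocycle `σ ∈ Z²(G, A)` corresponding to the extension (via a section `s`).  Then
`F^α S ≅ ⊕_{χ ∈ Irr(A,F)} F(χ)^{α_χ} G` as `F`-algebras, where for a character
`χ : A → Kˣ` (`K` a splitting field of `A` over `F`, i.e. containing a primitive
`exp(A)`-th root of unity), `α_χ(g,h) = α'(g,h)·χ(σ(g,h))` and `F(χ)` is the field
generated over `F` by the values of `χ`.  Here `Irr(A,F)` contains, for each simple
`FA`-module, exactly one character with the corresponding kernel. -/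
theorem stmt_14 (A S G : Type*) [CommGroup A] [Group S] [Group G]
    [Fintype A] [Fintype S] [Fintype G]
    (ι : A →* S) (hι : Function.Injective ι)
    (hcentral : ∀ a : A, ι a ∈ Subgroup.center S)
    (π : S →* G) (hπ : Function.Surjective π) (hexact : π.ker = ι.range)
    (s : G → S) (hs : ∀ g, π (s g) = g)
    (σ : G → G → A) (hσ : ∀ g h, s g * s h = ι (σ g h) * s (g * h))
    (F : Type*) [Field F] (hcharF : (Fintype.card A : F) ≠ 0)
    (K : Type*) [Field K] [Algebra F K]
    (ω : K) (hω : IsPrimitiveRoot ω (Monoid.exponent A))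
    (I : Finset (A →* Kˣ))
    (hI1 : ∀ χ ∈ I, ∀ χ' ∈ I,
      RingHom.ker (liftChar F A K χ).toRingHom = RingHom.ker (liftChar F A K χ').toRingHom →
        χ = χ')
    (hI2 : ∀ φ : MonoidAlgebra F A →ₐ[F] K, ∃ χ ∈ I,
      RingHom.ker (liftChar F A K χ).toRingHom = RingHom.ker φ.toRingHom)
    (α' : G → G → Fˣ) (hα' : IsTwoCocycle' α')
    (α : S → S → Fˣ) (hinfl : ∀ x y : S, α x y = α' (π x) (π y))
    (L : {χ // χ ∈ I} → IntermediateField F K)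
    (hL : ∀ χ : {χ // χ ∈ I},
      L χ = IntermediateField.adjoin F (Set.range fun a : A => ((χ.1 a : Kˣ) : K)))
    (c : ∀ χ : {χ // χ ∈ I}, G → G → L χ)
    (hc : ∀ (χ : {χ // χ ∈ I}) (g h : G),
      ((c χ g h : K)) = algebraMap F K ((α' g h : Fˣ) : F) * ((χ.1 (σ g h) : Kˣ) : K))
    (B : {χ // χ ∈ I} → Type*) [∀ χ, Ring (B χ)] [∀ χ, Algebra (L χ) (B χ)]
    [∀ χ, Algebra F (B χ)] [∀ χ, IsScalarTower F (L χ) (B χ)]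
    (v : ∀ χ : {χ // χ ∈ I}, Module.Basis G (L χ) (B χ))
    (hv : ∀ (χ : {χ // χ ∈ I}) (g h : G), v χ g * v χ h = c χ g h • v χ (g * h))
    (T : Type*) [Ring T] [Algebra F T] (u : Module.Basis S F T)
    (hu : ∀ x y : S, u x * u y = ((α x y : Fˣ) : F) • u (x * y)) :
    Nonempty (T ≃ₐ[F] ∀ χ : {χ // χ ∈ I}, B χ) := by
  classical
  haveI : IsSemisimpleRing (MonoidAlgebra F A) := monoidAlgebraSemisimple F A hcharF
  set n := Monoid.exponent A with hnn
  have hn : n ≠ 0 := Monoid.exponent_ne_zero_of_finite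
  -- basic structure of the extension
  have hπι : ∀ a : A, π (ι a) = 1 := by
    intro a
    have : ι a ∈ π.ker := hexact ▸ ⟨a, rfl⟩
    exact this
  have haex : ∀ x : S, ∃ a : A, ι a = x * (s (π x))⁻¹ := by
    intro x
    have : x * (s (π x))⁻¹ ∈ π.ker := by
      rw [MonoidHom.mem_ker, map_mul, map_inv, hs, mul_inv_cancel]
    rw [hexact] at this
    exact this
  choose aOf haOf using haex
  have hxdecomp : ∀ x : S, x = ι (aOf x) * s (π x) := by
    intro x; rw [haOf x]; group
  have hπmix : ∀ (a : A) (g : G), π (ι a * s g) = g := by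
    intro a g; rw [map_mul, hπι, hs, one_mul]
  have haOf_eq : ∀ (a : A) (g : G), aOf (ι a * s g) = a := by
    intro a g
    apply hι
    rw [haOf, hπmix, mul_inv_cancel_right]
  have hcomm : ∀ (b : S) (a : A), b * ι a = ι a * b := fun b a =>
    (Subgroup.mem_center_iff.mp (hcentral a) b)
  have hkeyA : ∀ x y : S, aOf (x * y) = aOf x * aOf y * σ (π x) (π y) := by
    intro x y
    have hxy : x * y = ι (aOf x * aOf y * σ (π x) (π y)) * s (π x * π y) := by
      conv_lhs => rw [hxdecomp x, hxdecomp y]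
      rw [map_mul, map_mul]
      calc ι (aOf x) * s (π x) * (ι (aOf y) * s (π y))
          = ι (aOf x) * (s (π x) * ι (aOf y)) * s (π y) := by group
        _ = ι (aOf x) * (ι (aOf y) * s (π x)) * s (π y) := by rw [hcomm]
        _ = ι (aOf x) * ι (aOf y) * (s (π x) * s (π y)) := by group
        _ = ι (aOf x) * ι (aOf y) * (ι (σ (π x) (π y)) * s (π x * π y)) := by rw [hσ]
        _ = ι (aOf x) * ι (aOf y) * ι (σ (π x) (π y)) * s (π x * π y) := by group
    rw [hxy, haOf_eq]
  -- values of characters lie in L χ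
  have hwmem : ∀ (χ : {χ // χ ∈ I}) (a : A), ((χ.1 a : Kˣ) : K) ∈ L χ := by
    intro χ a; rw [hL]; exact IntermediateField.subset_adjoin _ _ ⟨a, rfl⟩
  let w : ∀ χ : {χ // χ ∈ I}, A → L χ := fun χ a => ⟨_, hwmem χ a⟩
  have hwcoe : ∀ (χ : {χ // χ ∈ I}) (a : A), ((w χ a : L χ) : K) = ((χ.1 a : Kˣ) : K) :=
    fun χ a => rfl
  have hlift_of : ∀ (χ : A →* Kˣ) (a : A),
      liftChar F A K χ (MonoidAlgebra.of F A a) = ((χ a : Kˣ) : K) := by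
    intro χ a; simp [liftChar]
  have hbase : ∀ z : MonoidAlgebra F A, z = ∑ a : A, z.coeff a • MonoidAlgebra.of F A a := by
    intro z
    ext b
    rw [MonoidAlgebra.coeff_sum, Finsupp.finset_sum_apply]
    simp [MonoidAlgebra.of_apply, MonoidAlgebra.smul_single', Finsupp.single_apply]
  have hliftdecomp : ∀ (χ : A →* Kˣ) (z : MonoidAlgebra F A),
      liftChar F A K χ z = ∑ a : A, z.coeff a • ((χ a : Kˣ) : K) := by
    intro χ z
    conv_lhs => rw [hbase z]
    rw [map_sum]
    simp [liftChar, MonoidAlgebra.lift_single]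
  have hmemL : ∀ (χ : {χ // χ ∈ I}) (z : MonoidAlgebra F A), liftChar F A K χ.1 z ∈ L χ := by
    intro χ z
    induction z using MonoidAlgebra.induction_on with
    | of a => rw [hlift_of]; exact hwmem χ a
    | add f g hf hg => rw [map_add]; exact add_mem hf hg
    | smul r f hf =>
        rw [map_smul, Algebra.smul_def]
        exact mul_mem ((L χ).algebraMap_mem r) hf
  -- roots of unity facts
  have hpowK : ∀ (χ : A →* Kˣ) (a : A), ((χ a : Kˣ) : K) ^ n = 1 := by
    intro χ a
    have h1 : χ (a ^ n) = 1 := by rw [Monoid.pow_exponent_eq_one, map_one]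
    calc ((χ a : Kˣ) : K) ^ n = ((χ (a ^ n) : Kˣ) : K) := by rw [map_pow]; push_cast; ring
      _ = 1 := by rw [h1]; rfl
  have hXn : Polynomial.Splits ((Polynomial.X ^ n - Polynomial.C (1 : F)).map (algebraMap F K)) := by
    have hmap : (Polynomial.X ^ n - Polynomial.C (1 : F)).map (algebraMap F K)
        = Polynomial.X ^ n - Polynomial.C (1 : K) := by
      simp
    rw [hmap, Polynomial.splits_iff_card_roots]
    have : (Polynomial.X ^ n - Polynomial.C (1 : K)).roots = Polynomial.nthRoots n (1 : K) := rfl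
    rw [this, Polynomial.natDegree_X_pow_sub_C, hω.card_nthRoots 1, if_pos ⟨1, one_pow n⟩]
  -- surjectivity of liftChar onto L χ
  have hrange : ∀ (χ : {χ // χ ∈ I}) (y : K), y ∈ L χ → ∃ z, liftChar F A K χ.1 z = y := by
    intro χ y hy
    have halg : ∀ x ∈ (Set.range fun a : A => ((χ.1 a : Kˣ) : K)), IsAlgebraic F x := by
      rintro x ⟨a, rfl⟩
      exact ((auxIntSplit hn hXn _ (hpowK χ.1 a)).1).isAlgebraic
    have h1 : (L χ).toSubalgebra = Algebra.adjoin F (Set.range fun a : A => ((χ.1 a : Kˣ) : K)) := by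
      rw [hL]
      exact IntermediateField.adjoin_toSubalgebra_of_isAlgebraic halg
    have h2 : Algebra.adjoin F (Set.range fun a : A => ((χ.1 a : Kˣ) : K))
        ≤ (liftChar F A K χ.1).range := by
      apply Algebra.adjoin_le
      rintro x ⟨a, rfl⟩
      exact ⟨MonoidAlgebra.of F A a, hlift_of χ.1 a⟩
    have hy' : y ∈ (L χ).toSubalgebra := hy
    exact h2 (h1 ▸ hy')
  -- the codomain-restricted homomorphism into L χ
  let rc : ∀ χ : {χ // χ ∈ I}, MonoidAlgebra F A →+* L χ := fun χ =>
    RingHom.codRestrict (liftChar F A K χ.1).toRingHom (L χ) (hmemL χ)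
  have hrc : ∀ (χ : {χ // χ ∈ I}) (z : MonoidAlgebra F A),
      ((rc χ z : L χ) : K) = liftChar F A K χ.1 z := fun χ z => rfl
  have hrcsurj : ∀ χ : {χ // χ ∈ I}, Function.Surjective (rc χ) := by
    intro χ y
    obtain ⟨z, hz⟩ := hrange χ y y.2
    exact ⟨z, Subtype.ext (by rw [hrc, hz])⟩
  have hkerrc : ∀ χ : {χ // χ ∈ I},
      RingHom.ker (rc χ) = RingHom.ker (liftChar F A K χ.1).toRingHom := by
    intro χ
    ext z
    rw [RingHom.mem_ker, RingHom.mem_ker, ← ZeroMemClass.coe_eq_zero, hrc]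
    rfl
  have hmax : ∀ χ : {χ // χ ∈ I}, (RingHom.ker (liftChar F A K χ.1).toRingHom).IsMaximal := by
    intro χ
    rw [← hkerrc χ]
    exact RingHom.ker_isMaximal_of_surjective (rc χ) (hrcsurj χ)
  -- every maximal ideal is the kernel of some liftChar χ, χ ∈ I
  have hadjR : Algebra.adjoin F (Set.range (MonoidAlgebra.of F A)) = ⊤ := by
    have hall : ∀ z : MonoidAlgebra F A, z ∈ Algebra.adjoin F (Set.range (MonoidAlgebra.of F A)) := by
      intro z
      induction z using MonoidAlgebra.induction_on with
      | of a => exact Algebra.subset_adjoin ⟨a, rfl⟩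
      | add f g hf hg => exact add_mem hf hg
      | smul r f hf => exact Subalgebra.smul_mem _ hf r
    rw [eq_top_iff]
    exact fun z _ => hall z
  have hcover : ∀ m : Ideal (MonoidAlgebra F A), m.IsMaximal →
      ∃ χ : {χ // χ ∈ I}, RingHom.ker (liftChar F A K χ.1).toRingHom = m := by
    intro m hm
    letI : Field (MonoidAlgebra F A ⧸ m) := Ideal.Quotient.field m
    have hS' : IntermediateField.adjoin F
        (Set.range fun a : A => Ideal.Quotient.mkₐ F m (MonoidAlgebra.of F A a)) = ⊤ := by
      have h1 : Algebra.adjoin F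
          (Set.range fun a : A => Ideal.Quotient.mkₐ F m (MonoidAlgebra.of F A a)) = ⊤ := by
        have h2 : (Set.range fun a : A => Ideal.Quotient.mkₐ F m (MonoidAlgebra.of F A a))
            = (Ideal.Quotient.mkₐ F m) '' (Set.range (MonoidAlgebra.of F A)) := by
          rw [← Set.range_comp]; rfl
        rw [h2, ← AlgHom.map_adjoin, hadjR, Algebra.map_top]
        exact (AlgHom.range_eq_top _).mpr (Ideal.Quotient.mkₐ_surjective F m)
      rw [eq_top_iff]
      intro x _
      exact IntermediateField.algebra_adjoin_le_adjoin F _ (h1 ▸ Algebra.mem_top)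
    have hK' : ∀ x ∈ (Set.range fun a : A => Ideal.Quotient.mkₐ F m (MonoidAlgebra.of F A a)),
        IsIntegral F x ∧ ((minpoly F x).map (algebraMap F K)).Splits := by
      rintro x ⟨a, rfl⟩
      apply auxIntSplit hn hXn
      have : (MonoidAlgebra.of F A a) ^ n = 1 := by
        rw [← map_pow, Monoid.pow_exponent_eq_one, map_one]
      rw [← map_pow, this, map_one]
    obtain ⟨ψ⟩ := IntermediateField.nonempty_algHom_of_adjoin_splits hK' hS'
    obtain ⟨χ0, hχ0I, hker⟩ := hI2 (ψ.comp (Ideal.Quotient.mkₐ F m))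
    refine ⟨⟨χ0, hχ0I⟩, ?_⟩
    rw [hker]
    ext z
    rw [RingHom.mem_ker]
    have hcoe : (ψ.comp (Ideal.Quotient.mkₐ F m)).toRingHom z = ψ (Ideal.Quotient.mkₐ F m z) := rfl
    rw [hcoe, map_eq_zero_iff ψ ψ.toRingHom.injective]
    rw [show (Ideal.Quotient.mkₐ F m z : MonoidAlgebra F A ⧸ m) = Ideal.Quotient.mk m z from rfl]
    exact Ideal.Quotient.eq_zero_iff_mem
  -- injectivity of the product of the liftChar's
  have hinjΨ : ∀ z : MonoidAlgebra F A,
      (∀ χ : {χ // χ ∈ I}, liftChar F A K χ.1 z = 0) → z = 0 := by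
    intro z hz
    obtain ⟨e, he, hspan⟩ := IsSemisimpleRing.ideal_eq_span_idempotent (Ideal.span {z})
    by_cases h0 : e = 0
    · have hsp : Ideal.span {z} = ⊥ := by rw [hspan, h0]; simp
      have hmem := Ideal.mem_span_singleton_self z
      rw [hsp] at hmem
      simpa using hmem
    · exfalso
      have hne : Ideal.span {1 - e} ≠ ⊤ := by
        intro htop
        rw [Ideal.span_singleton_eq_top] at htop
        obtain ⟨q, hq⟩ := htop.exists_right_inv
        apply h0
        calc e = e * ((1 - e) * q) := by rw [hq, mul_one]
          _ = (e * (1 - e)) * q := by ring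
          _ = 0 := by rw [mul_sub, mul_one, he.eq, sub_self, zero_mul]
      obtain ⟨m, hm2, hle⟩ := Ideal.exists_le_maximal _ hne
      obtain ⟨χ, hχ⟩ := hcover m hm2
      have hemem : e ∈ RingHom.ker (liftChar F A K χ.1).toRingHom := by
        have hez : e ∈ Ideal.span {z} := hspan ▸ Ideal.mem_span_singleton_self e
        rw [Ideal.mem_span_singleton] at hez
        obtain ⟨t, ht⟩ := hez
        rw [RingHom.mem_ker, ht]
        have : liftChar F A K χ.1 (z * t) = 0 := by rw [map_mul, hz χ, zero_mul]
        exact this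
      have h1m : (1 : MonoidAlgebra F A) ∈ m := by
        have he' : e ∈ m := hχ ▸ hemem
        have h2 : 1 - e ∈ m := hle (Ideal.mem_span_singleton_self _)
        simpa using add_mem he' h2
      exact hm2.ne_top ((Ideal.eq_top_iff_one m).mpr h1m)
  -- joint surjectivity (Chinese remainder)
  have hsurjΨ : ∀ d : (∀ χ : {χ // χ ∈ I}, L χ), ∃ z : MonoidAlgebra F A,
      ∀ χ : {χ // χ ∈ I}, liftChar F A K χ.1 z = (d χ : K) := by
    intro d
    set J : {χ // χ ∈ I} → Ideal (MonoidAlgebra F A) :=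
      fun χ => RingHom.ker (liftChar F A K χ.1).toRingHom with hJ
    have hpair : Pairwise (Function.onFun IsCoprime J) := by
      intro χ χ' hne
      refine Ideal.isCoprime_iff_sup_eq.mpr (Ideal.IsMaximal.coprime_of_ne (hmax χ) (hmax χ') ?_)
      intro heq
      exact hne (Subtype.ext (hI1 χ.1 χ.2 χ'.1 χ'.2 heq))
    let q : ∀ χ : {χ // χ ∈ I}, (MonoidAlgebra F A ⧸ J χ) →+* L χ := fun χ =>
      Ideal.Quotient.lift (J χ) (rc χ) (fun a ha => by
        rw [← RingHom.mem_ker, hkerrc χ]; exact ha)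
    have hq : ∀ (χ : {χ // χ ∈ I}) (z : MonoidAlgebra F A),
        q χ (Ideal.Quotient.mk (J χ) z) = rc χ z := fun χ z => rfl
    have hqsurj : ∀ χ : {χ // χ ∈ I}, Function.Surjective (q χ) := by
      intro χ y
      obtain ⟨z, hz⟩ := hrcsurj χ y
      exact ⟨Ideal.Quotient.mk (J χ) z, by rw [hq, hz]⟩
    choose y hy using fun χ => hqsurj χ (d χ)
    obtain ⟨zq, hzq⟩ := Ideal.quotientInfToPiQuotient_surj hpair y
    obtain ⟨z, rfl⟩ := Ideal.Quotient.mk_surjective zq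
    refine ⟨z, fun χ => ?_⟩
    have h1 := congrFun hzq χ
    rw [Ideal.quotientInfToPiQuotient_mk'] at h1
    have h2 : rc χ z = d χ := by rw [← hq, h1, hy]
    rw [← hrc, h2]
  -- the linear map Φ : T → ∏ B χ
  let bvec : S → (∀ χ : {χ // χ ∈ I}, B χ) := fun x χ => w χ (aOf x) • v χ (π x)
  let Φ : T →ₗ[F] (∀ χ : {χ // χ ∈ I}, B χ) := u.constr ℕ bvec
  have hΦu : ∀ x : S, Φ (u x) = bvec x := fun x => u.constr_basis ℕ bvec x
  have hscalar : ∀ (χ : {χ // χ ∈ I}) (r : F) (l : L χ),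
      (((r • l : L χ)) : K) = algebraMap F K r * (l : K) := by
    intro χ r l
    rw [IntermediateField.coe_smul, Algebra.smul_def]
  have hbasismul : ∀ x y : S, Φ (u x * u y) = Φ (u x) * Φ (u y) := by
    intro x y
    rw [hu, hinfl, map_smul, hΦu, hΦu, hΦu]
    funext χ
    rw [Pi.smul_apply, Pi.mul_apply]
    show ((α' (π x) (π y) : Fˣ) : F) • (w χ (aOf (x * y)) • v χ (π (x * y)))
      = (w χ (aOf x) • v χ (π x)) * (w χ (aOf y) • v χ (π y))
    rw [smul_mul_assoc, mul_smul_comm, smul_smul, hv, smul_smul, map_mul π, ← smul_assoc]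
    congr 1
    apply Subtype.ext
    show (((((α' (π x) (π y) : Fˣ) : F) • w χ (aOf (x * y)) : L χ)) : K)
      = ((w χ (aOf x) * w χ (aOf y) * c χ (π x) (π y) : L χ) : K)
    push_cast
    rw [Algebra.smul_def]
    have hval : ((χ.1 (aOf (x * y)) : Kˣ) : K)
        = ((χ.1 (aOf x) : Kˣ) : K) * ((χ.1 (aOf y) : Kˣ) : K)
          * ((χ.1 (σ (π x) (π y)) : Kˣ) : K) := by
      rw [hkeyA x y, map_mul χ.1, map_mul χ.1]
      push_cast
      ring
    rw [hwcoe, hval, hc χ (π x) (π y)]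
    ring
  have hmulright : ∀ (y : S) (t : T), Φ (t * u y) = Φ t * Φ (u y) := by
    intro y
    have heq : Φ.comp (LinearMap.mulRight F (u y))
        = (LinearMap.mulRight F (Φ (u y))).comp Φ := by
      apply Module.Basis.ext u
      intro x
      simp only [LinearMap.comp_apply, LinearMap.mulRight_apply]
      exact hbasismul x y
    intro t
    have := DFunLike.congr_fun heq t
    simpa only [LinearMap.comp_apply, LinearMap.mulRight_apply] using this
  have hmul : ∀ t t' : T, Φ (t * t') = Φ t * Φ t' := by
    intro t t'
    have heq : Φ.comp (LinearMap.mulLeft F t) = (LinearMap.mulLeft F (Φ t)).comp Φ := by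
      apply Module.Basis.ext u
      intro y
      simp only [LinearMap.comp_apply, LinearMap.mulLeft_apply]
      exact hmulright y t
    have := DFunLike.congr_fun heq t'
    simpa only [LinearMap.comp_apply, LinearMap.mulLeft_apply] using this
  -- coordinate description of Φ
  have hbijGA : Function.Bijective (fun p : G × A => ι p.2 * s p.1) := by
    constructor
    · rintro ⟨g, a⟩ ⟨g', a'⟩ h
      simp only at h
      have hg : g = g' := by rw [← hπmix a g, ← hπmix a' g', h]
      subst hg
      exact Prod.ext rfl (hι (mul_right_cancel h))
    · intro x
      exact ⟨(π x, aOf x), (hxdecomp x).symm⟩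
  let eGA : G × A ≃ S := Equiv.ofBijective _ hbijGA
  have heGA : ∀ p : G × A, eGA p = ι p.2 * s p.1 := fun p => rfl
  have hΦcoord : ∀ (t : T) (χ : {χ // χ ∈ I}),
      Φ t χ = ∑ g : G, (∑ a : A, u.equivFun t (ι a * s g) • w χ a) • v χ g := by
    intro t χ
    have h1 : Φ t = ∑ x : S, u.equivFun t x • bvec x := u.constr_apply_fintype ℕ bvec t
    have h2 : (∑ x : S, u.equivFun t x • bvec x) χ
        = ∑ x : S, u.equivFun t x • (w χ (aOf x) • v χ (π x)) := by
      rw [Finset.sum_apply]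
      rfl
    rw [h1, h2, ← Equiv.sum_comp eGA (fun x => u.equivFun t x • (w χ (aOf x) • v χ (π x))),
      Fintype.sum_prod_type]
    simp only [heGA, haOf_eq, hπmix, Finset.sum_smul, smul_assoc]
  -- injectivity of Φ
  have hker : ∀ t : T, Φ t = 0 → t = 0 := by
    intro t ht
    have hcoef : ∀ (g : G) (a : A), u.equivFun t (ι a * s g) = 0 := by
      intro g
      have hLcoef : ∀ χ : {χ // χ ∈ I},
          (∑ a : A, u.equivFun t (ι a * s g) • w χ a) = 0 := by
        intro χ
        have h1 : ∑ g' : G, (∑ a : A, u.equivFun t (ι a * s g') • w χ a) • v χ g' = 0 := by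
          rw [← hΦcoord t χ, ht]
          rfl
        exact Fintype.linearIndependent_iff.mp (v χ).linearIndependent _ h1 g
      set z : MonoidAlgebra F A := ∑ a : A, u.equivFun t (ι a * s g) • MonoidAlgebra.of F A a
        with hzdef
      have hzchar : ∀ χ : {χ // χ ∈ I}, liftChar F A K χ.1 z = 0 := by
        intro χ
        have hval2 : ∑ a : A, u.equivFun t (ι a * s g) • ((χ.1 a : Kˣ) : K) = 0 := by
          have h2 := congrArg (fun l : L χ => (l : K)) (hLcoef χ)
          push_cast at h2
          simpa [hwcoe] using h2
        rw [hzdef, map_sum]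
        simp only [map_smul, hlift_of]
        exact hval2
      have hz0 : z = 0 := hinjΨ z hzchar
      intro a
      have hfin : ∑ a' : A, u.equivFun t (ι a' * s g)
          • (Finsupp.basisSingleOne (ι := A) (R := F)) a' = 0 := by
        rw [hzdef] at hz0
        have hz0' := congrArg MonoidAlgebra.coeff hz0
        simpa [Finsupp.coe_basisSingleOne, MonoidAlgebra.of_apply, MonoidAlgebra.coeff_sum, MonoidAlgebra.coeff_single] using hz0'
      exact Fintype.linearIndependent_iff.mp
        (Finsupp.basisSingleOne (ι := A) (R := F)).linearIndependent _ hfin a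
    have hrep : u.equivFun t = 0 := by
      funext x
      have hx := hcoef (π x) (aOf x)
      rw [← hxdecomp x] at hx
      simpa using hx
    exact u.equivFun.map_eq_zero_iff.mp hrep
  have hinj : Function.Injective Φ := by
    intro t t' h
    have h0 : Φ (t - t') = 0 := by rw [map_sub, h, sub_self]
    exact sub_eq_zero.mp (hker _ h0)
  -- surjectivity of Φ
  have hsurj : Function.Surjective Φ := by
    intro b
    choose zg hzg using fun g : G => hsurjΨ (fun χ => (v χ).equivFun (b χ) g)
    refine ⟨∑ g : G, ∑ a : A, (zg g).coeff a • u (ι a * s g), ?_⟩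
    funext χ
    rw [map_sum, Finset.sum_apply]
    have hterm : ∀ g : G, (Φ (∑ a : A, (zg g).coeff a • u (ι a * s g))) χ
        = ((v χ).equivFun (b χ) g) • v χ g := by
      intro g
      rw [map_sum, Finset.sum_apply]
      have hterm2 : ∀ a : A, (Φ ((zg g).coeff a • u (ι a * s g))) χ = ((zg g).coeff a • w χ a) • v χ g := by
        intro a
        rw [map_smul, hΦu]
        show (zg g).coeff a • (bvec (ι a * s g) χ) = _
        show (zg g).coeff a • (w χ (aOf (ι a * s g)) • v χ (π (ι a * s g))) = _
        rw [haOf_eq, hπmix, ← smul_assoc]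
      rw [Finset.sum_congr rfl (fun a _ => hterm2 a), ← Finset.sum_smul]
      congr 1
      apply Subtype.ext
      push_cast
      simp only [IntermediateField.coe_smul, hwcoe]
      rw [← hliftdecomp χ.1 (zg g)]
      exact hzg g χ
    rw [Finset.sum_congr rfl (fun g _ => hterm g)]
    exact (v χ).sum_equivFun (b χ)
  -- conclusion
  have hone : Φ 1 = 1 := by
    obtain ⟨t1, ht1⟩ := hsurj 1
    have h := hmul 1 t1
    rw [one_mul, ht1, mul_one] at h
    exact h.symm
  exact ⟨AlgEquiv.ofLinearEquiv (LinearEquiv.ofBijective Φ ⟨hinj, hsurj⟩) hone hmul⟩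
end

section
/- Let 1 → A → S → G → 1 be a central extension, F ⊆ K fields, α ∈ Z^2(S,F^*) inflated from α' ∈ Z^2(G,F^*), σ ∈ Z^2(G,A) a cocycle of the extension with associated section G → S, and χ : A → K^* a homomorphism. Then the F-linear map ψ_χ : F^α S → F(χ)^{α_χ} G sending u_{ag} ↦ χ(a)·v_g (for a ∈ A, g ∈ G) is a surjective ring homomorphism. -/
open IntermediateField

set_option maxHeartbeats 1600000 in
/-- Let `1 → A → S → G → 1` be a central extension, `F ⊆ K` fields, `α ∈ Z²(S,Fˣ)` inflated
from `α' ∈ Z²(G,Fˣ)`, `σ ∈ Z²(G,A)` a cocycle of the extension with associated section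
`s : G → S`, and `χ : A → Kˣ` a homomorphism with values generating `F(χ) ⊆ K`.  Then the
`F`-linear map `ψ_χ : F^α S → F(χ)^{α_χ} G` sending `u_{ι(a)·s(g)} ↦ χ(a) • v_g` is a
surjective ring homomorphism, where `α_χ(g,h) = α'(g,h)·χ(σ(g,h))`. -/
theorem stmt_16 (A S G : Type*) [CommGroup A] [Group S] [Group G]
    [Fintype A] [Fintype S] [Fintype G]
    (ι : A →* S) (hι : Function.Injective ι)
    (hcentral : ∀ a : A, ι a ∈ Subgroup.center S)
    (π : S →* G) (hπ : Function.Surjective π) (hexact : π.ker = ι.range)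
    (s : G → S) (hs : ∀ g, π (s g) = g)
    (σ : G → G → A) (hσ : ∀ g h, s g * s h = ι (σ g h) * s (g * h))
    (F K : Type*) [Field F] [Field K] [Algebra F K]
    (α' : G → G → Fˣ) (hα' : IsTwoCocycle' α')
    (α : S → S → Fˣ) (hinfl : ∀ x y : S, α x y = α' (π x) (π y))
    (χ : A →* Kˣ)
    (L : IntermediateField F K)
    (hL : L = IntermediateField.adjoin F (Set.range fun a : A => ((χ a : Kˣ) : K)))
    (χL : A → L) (hχL : ∀ a : A, (χL a : K) = ((χ a : Kˣ) : K))
    (c : G → G → L) (hc : ∀ g h : G,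
      ((c g h : K)) = algebraMap F K ((α' g h : Fˣ) : F) * ((χ (σ g h) : Kˣ) : K))
    (T : Type*) [Ring T] [Algebra F T] (u : Module.Basis S F T)
    (hu : ∀ x y : S, u x * u y = ((α x y : Fˣ) : F) • u (x * y))
    (B : Type*) [Ring B] [Algebra L B] [Algebra F B] [IsScalarTower F L B]
    (v : Module.Basis G L B)
    (hv : ∀ g h : G, v g * v h = c g h • v (g * h)) :
    ∃ ψ : T →+* B, Function.Surjective ψ ∧
      (∀ (k : F) (t : T), ψ (k • t) = k • ψ t) ∧
      (∀ (a : A) (g : G), ψ (u (ι a * s g)) = χL a • v g) := by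
  classical
  -- π kills ι
  have hπι : ∀ a : A, π (ι a) = 1 := by
    intro a
    have : ι a ∈ π.ker := hexact ▸ MonoidHom.mem_range.mpr ⟨a, rfl⟩
    exact this
  have hcomm : ∀ (a : A) (z : S), z * ι a = ι a * z := fun a z =>
    Subgroup.mem_center_iff.mp (hcentral a) z
  -- choose "A-part" of each element of S
  have haux : ∀ x : S, ∃ b : A, ι b = x * (s (π x))⁻¹ := by
    intro x
    have hk : x * (s (π x))⁻¹ ∈ π.ker := by
      have : π (x * (s (π x))⁻¹) = 1 := by
        rw [map_mul, map_inv, hs, mul_inv_cancel]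
      exact this
    rw [hexact] at hk
    exact MonoidHom.mem_range.mp hk
  choose b hb using haux
  have hb' : ∀ x : S, x = ι (b x) * s (π x) := by
    intro x; rw [hb]; group
  have hbspec : ∀ (a : A) (g : G), b (ι a * s g) = a := by
    intro a g
    apply hι
    rw [hb, map_mul, hπι, one_mul, hs, mul_inv_cancel_right]
  have hπas : ∀ (a : A) (g : G), π (ι a * s g) = g := by
    intro a g; rw [map_mul, hπι, one_mul, hs]
  -- multiplicativity of b
  have hbmul : ∀ x y : S, b (x * y) = b x * b y * σ (π x) (π y) := by
    intro x y
    apply hι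
    have key : ι (b x * b y * σ (π x) (π y)) * s (π (x * y)) = x * y := by
      rw [map_mul, map_mul, map_mul]
      calc ι (b x) * ι (b y) * ι (σ (π x) (π y)) * s (π x * π y)
          = ι (b x) * ι (b y) * (ι (σ (π x) (π y)) * s (π x * π y)) := by group
        _ = ι (b x) * ι (b y) * (s (π x) * s (π y)) := by rw [← hσ]
        _ = ι (b x) * (ι (b y) * s (π x)) * s (π y) := by group
        _ = ι (b x) * (s (π x) * ι (b y)) * s (π y) := by rw [hcomm]
        _ = (ι (b x) * s (π x)) * (ι (b y) * s (π y)) := by group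
        _ = x * y := by rw [← hb', ← hb']
    have key2 : ι (b (x * y)) * s (π (x * y)) = x * y := (hb' (x * y)).symm
    exact mul_right_cancel (key2.trans key.symm)
  -- s 1 and σ identities
  have hs1 : s 1 = ι (σ 1 1) := by
    have h1 := hσ 1 1
    rw [one_mul] at h1
    exact mul_right_cancel h1
  have hσ1g : ∀ g : G, σ 1 g = σ 1 1 := by
    intro g
    apply hι
    have h1 := hσ 1 g
    rw [one_mul] at h1
    have : s 1 = ι (σ 1 g) := mul_right_cancel h1
    rw [← this, hs1]
  have hσg1 : ∀ g : G, σ g 1 = σ 1 1 := by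
    intro g
    apply hι
    have h1 := hσ g 1
    rw [mul_one, hs1, hcomm] at h1
    have : ι (σ 1 1) = ι (σ g 1) := mul_right_cancel h1
    rw [← this]
  -- α' identities
  have hα'1g : ∀ g : G, α' 1 g = α' 1 1 := by
    intro g
    have h1 := hα' 1 1 g
    rw [one_mul, one_mul] at h1
    exact (mul_right_cancel h1).symm
  have hα'g1 : ∀ g : G, α' g 1 = α' 1 1 := by
    intro g
    have h1 := hα' g 1 1
    rw [mul_one, one_mul] at h1
    exact mul_left_cancel (h1.trans (mul_comm _ _))
  -- c identities
  have hc1g : ∀ g : G, c 1 g = c 1 1 := by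
    intro g
    apply Subtype.ext
    rw [hc, hc, hα'1g, hσ1g]
  have hcg1 : ∀ g : G, c g 1 = c 1 1 := by
    intro g
    apply Subtype.ext
    rw [hc, hc, hα'g1, hσg1]
  have hc11ne : (c 1 1 : K) ≠ 0 := by
    rw [hc]
    exact mul_ne_zero (by simpa using (α' 1 1).ne_zero) (χ (σ 1 1)).ne_zero
  have hc11ne' : c 1 1 ≠ 0 := by
    intro h; apply hc11ne; rw [h]; simp
  -- b 1 = (σ 1 1)⁻¹
  have hb1 : b 1 = (σ 1 1)⁻¹ := by
    apply hι
    rw [hb, map_one, one_mul, hs1, map_inv]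
  -- the linear map
  set f : S → B := fun x => χL (b x) • v (π x) with hf
  set ψ₀ : T →ₗ[F] B := u.constr F f with hψ₀
  have hψu : ∀ x : S, ψ₀ (u x) = χL (b x) • v (π x) := fun x => u.constr_basis F f x
  -- coercion lemmas
  have hcoeF : ∀ (k : F) (l : L), ((k • l : L) : K) = algebraMap F K k * (l : K) := by
    intro k l
    rw [Algebra.smul_def]
    push_cast
    rw [IsScalarTower.algebraMap_apply F L K]
  -- key multiplicative identity in L
  have hkeyL : ∀ x y : S,
      ((α x y : Fˣ) : F) • χL (b (x * y)) = χL (b x) * χL (b y) * c (π x) (π y) := by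
    intro x y
    apply Subtype.ext
    push_cast
    rw [Algebra.smul_def, hχL, hχL, hχL, hc, hbmul, map_mul, map_mul, hinfl]
    push_cast
    ring
  have hbasismul : ∀ x y : S, ψ₀ (u x * u y) = ψ₀ (u x) * ψ₀ (u y) := by
    intro x y
    rw [hu, map_smul, hψu, hψu, hψu, smul_mul_smul_comm, hv, map_mul π, smul_smul,
      ← smul_assoc, hkeyL]
  -- extend multiplicativity
  have step1 : ∀ (y : S) (t : T), ψ₀ (t * u y) = ψ₀ t * ψ₀ (u y) := by
    intro y
    have h : ψ₀ ∘ₗ LinearMap.mulRight F (u y) = LinearMap.mulRight F (ψ₀ (u y)) ∘ₗ ψ₀ :=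
      Module.Basis.ext u fun x => by
        simp only [LinearMap.comp_apply, LinearMap.mulRight_apply]
        exact hbasismul x y
    intro t
    simpa using LinearMap.congr_fun h t
  have hmul : ∀ t1 t2 : T, ψ₀ (t1 * t2) = ψ₀ t1 * ψ₀ t2 := by
    intro t1
    have h : ψ₀ ∘ₗ LinearMap.mulLeft F t1 = LinearMap.mulLeft F (ψ₀ t1) ∘ₗ ψ₀ :=
      Module.Basis.ext u fun y => by
        simp only [LinearMap.comp_apply, LinearMap.mulLeft_apply]
        exact step1 y t1
    intro t2
    simpa using LinearMap.congr_fun h t2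
  -- identity of T
  have honeT : (1 : T) = (((α' 1 1)⁻¹ : Fˣ) : F) • u 1 := by
    set e : T := (((α' 1 1)⁻¹ : Fˣ) : F) • u 1 with he
    have hmle : LinearMap.mulLeft F e = LinearMap.id := by
      apply Module.Basis.ext u
      intro x
      simp only [LinearMap.mulLeft_apply, LinearMap.id_apply, he]
      rw [smul_mul_assoc, hu, hinfl, map_one, hα'1g (π x), one_mul, smul_smul,
        Units.val_inv_eq_inv_val, inv_mul_cancel₀ (α' 1 1).ne_zero, one_smul]
    have := LinearMap.congr_fun hmle 1
    simpa using this.symm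
  -- identity of B
  have honeB : (1 : B) = (c 1 1)⁻¹ • v 1 := by
    set e : B := (c 1 1)⁻¹ • v 1 with he
    have hmle : LinearMap.mulLeft L e = LinearMap.id := by
      apply Module.Basis.ext v
      intro g
      simp only [LinearMap.mulLeft_apply, LinearMap.id_apply, he]
      rw [smul_mul_assoc, hv, hc1g g, one_mul, smul_smul, inv_mul_cancel₀ hc11ne', one_smul]
    have := LinearMap.congr_fun hmle 1
    simpa using this.symm
  -- c 1 1 inverse decomposition
  have hcinv : (c 1 1)⁻¹ = (((α' 1 1)⁻¹ : Fˣ) : F) • χL ((σ 1 1)⁻¹) := by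
    refine (eq_inv_of_mul_eq_one_left ?_).symm
    apply Subtype.ext
    push_cast
    rw [Algebra.smul_def, hχL, hc, map_inv]
    push_cast
    field_simp
  -- ψ₀ maps 1 to 1
  have hone : ψ₀ 1 = 1 := by
    rw [honeT, map_smul, hψu, map_one π, hb1, honeB, hcinv, smul_assoc]
  -- the ring hom
  let ψ : T →+* B :=
    { toFun := ψ₀
      map_one' := hone
      map_mul' := hmul
      map_zero' := map_zero ψ₀
      map_add' := map_add ψ₀ }
  have hψsmul : ∀ (k : F) (t : T), ψ (k • t) = k • ψ t := fun k t => map_smul ψ₀ k t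
  have hψuag : ∀ (a : A) (g : G), ψ (u (ι a * s g)) = χL a • v g := by
    intro a g
    show ψ₀ (u (ι a * s g)) = χL a • v g
    rw [hψu, hbspec, hπas]
  -- membership in the range
  have hrange : ∀ (a : A) (g : G), χL a • v g ∈ Set.range ψ := fun a g =>
    ⟨u (ι a * s g), hψuag a g⟩
  have hrange_add : ∀ x y : B, x ∈ Set.range ψ → y ∈ Set.range ψ → x + y ∈ Set.range ψ := by
    rintro _ _ ⟨t1, rfl⟩ ⟨t2, rfl⟩
    exact ⟨t1 + t2, map_add ψ t1 t2⟩
  have hrange_smulF : ∀ (k : F) (x : B), x ∈ Set.range ψ → k • x ∈ Set.range ψ := by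
    rintro k _ ⟨t, rfl⟩
    exact ⟨k • t, hψsmul k t⟩
  have hrange_mul : ∀ x y : B, x ∈ Set.range ψ → y ∈ Set.range ψ → x * y ∈ Set.range ψ := by
    rintro _ _ ⟨t1, rfl⟩ ⟨t2, rfl⟩
    exact ⟨t1 * t2, map_mul ψ t1 t2⟩
  -- the subalgebra of good scalars
  have hcinvmem : ∀ g : G, (c 1 1)⁻¹ • v g ∈ Set.range ψ := by
    intro g
    rw [hcinv, smul_assoc]
    exact hrange_smulF _ _ (hrange _ g)
  have hχcinv : ∀ a : A, χL a * (c 1 1)⁻¹ = (((α' 1 1)⁻¹ : Fˣ) : F) • χL (a * (σ 1 1)⁻¹) := by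
    intro a
    rw [hcinv, Algebra.smul_def, Algebra.smul_def, ← mul_assoc, mul_comm (χL a), mul_assoc]
    congr 1
    apply Subtype.ext
    push_cast
    rw [hχL, hχL, hχL, map_mul, map_inv]
    push_cast
    ring
  have hχLcinvmem : ∀ (a : A) (g : G), (χL a * (c 1 1)⁻¹) • v g ∈ Set.range ψ := by
    intro a g
    rw [hχcinv, smul_assoc]
    exact hrange_smulF _ _ (hrange _ g)
  set N : Subalgebra F L :=
    { carrier := {l : L | ∀ g : G, (l * (c 1 1)⁻¹) • v g ∈ Set.range ψ}
      mul_mem' := by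
        intro l1 l2 h1 h2 g
        obtain ⟨t1, ht1⟩ := h1 1
        obtain ⟨t2, ht2⟩ := h2 g
        refine ⟨t1 * t2, ?_⟩
        rw [map_mul, ht1, ht2, smul_mul_smul_comm, hv, hc1g g, one_mul, smul_smul]
        congr 1
        field_simp
      one_mem' := by
        intro g
        rw [one_mul]
        exact hcinvmem g
      add_mem' := by
        intro l1 l2 h1 h2 g
        rw [add_mul, add_smul]
        exact hrange_add _ _ (h1 g) (h2 g)
      zero_mem' := by
        intro g
        rw [zero_mul, zero_smul]
        exact ⟨0, map_zero ψ⟩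
      algebraMap_mem' := by
        intro k g
        rw [← Algebra.smul_def, smul_assoc]
        exact hrange_smulF _ _ (hcinvmem g) }
  -- N = ⊤
  have hχLN : ∀ a : A, χL a ∈ N := fun a g => hχLcinvmem a g
  have halg : ∀ x ∈ (Set.range fun a : A => ((χ a : Kˣ) : K)), IsAlgebraic F x := by
    rintro _ ⟨a, rfl⟩
    have hroot : ((χ a : Kˣ) : K) ^ Fintype.card A = 1 := by
      rw [← Units.val_pow_eq_pow_val, ← map_pow, pow_card_eq_one, map_one, Units.val_one]
    refine IsIntegral.isAlgebraic ⟨Polynomial.X ^ (Fintype.card A) - Polynomial.C 1, Polynomial.monic_X_pow_sub_C 1 Fintype.card_ne_zero, ?_⟩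
    simp [hroot]
  have hNtop : N = ⊤ := by
    have hadj : Algebra.adjoin F (Set.range χL) = (⊤ : Subalgebra F L) := by
      apply Subalgebra.map_injective (f := L.val) Subtype.val_injective
      rw [AlgHom.map_adjoin, Algebra.map_top]
      have himg : (⇑L.val '' Set.range χL) = Set.range fun a : A => ((χ a : Kˣ) : K) := by
        ext x
        constructor
        · rintro ⟨_, ⟨a, rfl⟩, rfl⟩
          exact ⟨a, (hχL a).symm⟩
        · rintro ⟨a, rfl⟩
          exact ⟨χL a, ⟨a, rfl⟩, hχL a⟩
      rw [himg, IntermediateField.range_val, ← IntermediateField.adjoin_toSubalgebra_of_isAlgebraic halg,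
        ← hL]
    rw [eq_top_iff, ← hadj]
    exact Algebra.adjoin_le (Set.range_subset_iff.mpr hχLN)
  -- all scalar multiples of basis vectors are in the range
  have hall : ∀ (l : L) (g : G), l • v g ∈ Set.range ψ := by
    intro l g
    have hmem : (l * c 1 1) ∈ N := hNtop ▸ Algebra.mem_top
    have := hmem g
    rwa [mul_assoc, mul_inv_cancel₀ hc11ne', mul_one] at this
  -- surjectivity
  have hsurj : Function.Surjective ψ := by
    intro x
    have hx : ∑ g : G, v.repr x g • v g = x := Module.Basis.sum_repr v x
    choose w hw using fun g : G => hall (v.repr x g) g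
    refine ⟨∑ g : G, w g, ?_⟩
    rw [map_sum]
    rw [← hx]
    exact Finset.sum_congr rfl fun g _ => hw g
  exact ⟨ψ, hsurj, hψsmul, hψuag⟩
end

section
/- Let G be a finite group and let α ∈ Z^2(G, C^*) be a 2-cocycle whose class has finite order n in H^2(G, C^*). If r is a natural number coprime to n, then the complex twisted group algebras C^α G and C^{α^r} G are isomorphic as rings. -/
/-- The group of 2-cocycles on `G` with values in `M` (trivial action). -/
def twoCocycles (G M : Type*) [Group G] [CommGroup M] : Subgroup (G → G → M) where
  carrier := {α | IsTwoCocycle' α}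
  one_mem' := fun _ _ _ => by simp
  mul_mem' := fun {a b} ha hb g h k => by
    simp only [Pi.mul_apply]
    rw [mul_mul_mul_comm, ha g h k, hb g h k, mul_mul_mul_comm]
  inv_mem' := fun {a} ha g h k => by
    simp only [Pi.inv_apply]
    rw [← mul_inv, ha g h k, mul_inv]

/-- The 2-coboundary associated to a 1-cochain `μ`. -/
def coboundaryFun {G M : Type*} [Group G] [CommGroup M] (μ : G → M) : G → G → M :=
  fun g h => μ g * μ h * (μ (g * h))⁻¹

lemma coboundaryFun_isTwoCocycle {G M : Type*} [Group G] [CommGroup M] (μ : G → M) :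
    IsTwoCocycle' (coboundaryFun μ) := by
  intro g h k
  simp only [coboundaryFun, mul_assoc]
  simp [mul_comm, mul_left_comm, mul_assoc]

/-- The coboundary homomorphism. -/
def coboundaryHom (G M : Type*) [Group G] [CommGroup M] : (G → M) →* twoCocycles G M where
  toFun μ := ⟨coboundaryFun μ, coboundaryFun_isTwoCocycle μ⟩
  map_one' := by
    refine Subtype.ext (funext fun g => funext fun h => ?_)
    simp [coboundaryFun]
  map_mul' μ ν := by
    refine Subtype.ext (funext fun g => funext fun h => ?_)
    simp only [coboundaryFun, Pi.mul_apply, Subgroup.coe_mul, mul_inv]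
    simp [mul_comm, mul_left_comm, mul_assoc]

/-- The second cohomology group of `G` with coefficients in `M` (trivial action). -/
def H2 (G M : Type*) [Group G] [CommGroup M] :=
  twoCocycles G M ⧸ (coboundaryHom G M).range

noncomputable instance (G M : Type*) [Group G] [CommGroup M] : CommGroup (H2 G M) :=
  QuotientGroup.Quotient.commGroup _

/-- The class of a 2-cocycle in second cohomology. -/
def H2.mk {G M : Type*} [Group G] [CommGroup M] (a : twoCocycles G M) : H2 G M :=
  QuotientGroup.mk a



open Polynomial IsCyclotomicExtension

lemma exists_aut_adjoin (n : ℕ+) {ζ : ℂ} (hζ : IsPrimitiveRoot ζ n)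
    (r : ℕ) (hr : Nat.Coprime r n) :
    ∃ τ : Algebra.adjoin ℚ ({ζ} : Set ℂ) ≃ₐ[ℚ] Algebra.adjoin ℚ ({ζ} : Set ℂ),
      τ ⟨ζ, Algebra.subset_adjoin rfl⟩ = ⟨ζ, Algebra.subset_adjoin rfl⟩ ^ (r : ℕ) := by
  haveI := hζ.adjoin_isCyclotomicExtension ℚ
  set L := Algebra.adjoin ℚ ({ζ} : Set ℂ)
  set ζ' : L := ⟨ζ, Algebra.subset_adjoin rfl⟩
  have hζ' : IsPrimitiveRoot ζ' n := by
    rw [← IsPrimitiveRoot.coe_submonoidClass_iff]; exact hζ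
  have hirr : Irreducible (cyclotomic n ℚ) := cyclotomic.irreducible_rat n.pos
  have hζ'' : IsPrimitiveRoot (ζ' ^ (r : ℕ)) n := hζ'.pow_of_coprime r hr
  have hmin : minpoly ℚ (hζ'.powerBasis ℚ).gen = minpoly ℚ (hζ''.powerBasis ℚ).gen := by
    simp only [IsPrimitiveRoot.powerBasis_gen]
    haveI : NeZero ((n : ℕ) : ℚ) := ⟨by exact_mod_cast n.ne_zero⟩
    rw [← hζ'.minpoly_eq_cyclotomic_of_irreducible hirr,
      ← hζ''.minpoly_eq_cyclotomic_of_irreducible hirr]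
  refine ⟨(hζ'.powerBasis ℚ).equivOfMinpoly (hζ''.powerBasis ℚ) hmin, ?_⟩
  have := (hζ'.powerBasis ℚ).equivOfMinpoly_gen (hζ''.powerBasis ℚ) hmin
  simpa only [IsPrimitiveRoot.powerBasis_gen] using this




set_option maxHeartbeats 1000000 in
lemma extend_aut' (R : Type*) [CommRing R] [Algebra R ℂ]
    (hinj : Function.Injective (algebraMap R ℂ)) (τ : R ≃+* R) :
    ∃ σ : ℂ ≃+* ℂ, ∀ x : R, σ (algebraMap R ℂ x) = algebraMap R ℂ (τ x) := by
  haveI : FaithfulSMul R ℂ := (faithfulSMul_iff_algebraMap_injective R ℂ).mpr hinj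
  obtain ⟨s, hs⟩ := exists_isTranscendenceBasis R (A := ℂ)
  haveI := IsAlgClosed.isAlgClosure_of_transcendence_basis _ hs
  set S := Algebra.adjoin R (Set.range ((↑) : s → ℂ)) with hS
  let e1 : MvPolynomial s R ≃+* MvPolynomial s R := MvPolynomial.mapEquiv _ τ
  let θ : S ≃+* S := (hs.1.aevalEquiv.symm.toRingEquiv.trans e1).trans hs.1.aevalEquiv.toRingEquiv
  have hθ : ∀ x : R, θ (algebraMap R S x) = algebraMap R S (τ x) := by
    intro x
    have h1 : hs.1.aevalEquiv.symm (algebraMap R S x) = MvPolynomial.C x := by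
      rw [AlgEquiv.symm_apply_eq, ← MvPolynomial.algebraMap_eq, AlgEquiv.commutes]
    show hs.1.aevalEquiv (e1 (hs.1.aevalEquiv.symm (algebraMap R S x))) = _
    rw [h1]
    have h2 : e1 (MvPolynomial.C x) = MvPolynomial.C (τ x) := by
      simp [e1, MvPolynomial.mapEquiv_apply]
    rw [h2, ← MvPolynomial.algebraMap_eq, AlgEquiv.commutes]
  let σ := IsAlgClosure.equivOfEquiv ℂ ℂ θ
  refine ⟨σ, fun x => ?_⟩
  have h3 := IsAlgClosure.equivOfEquiv_algebraMap ℂ ℂ θ (algebraMap R S x)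
  rw [hθ] at h3
  have h4 : ∀ y : R, algebraMap S ℂ (algebraMap R S y) = algebraMap R ℂ y := by
    intro y
    rw [← IsScalarTower.algebraMap_apply]
  rw [h4, h4] at h3
  exact h3

lemma exists_aut (n : ℕ) (hn : 0 < n) (r : ℕ) (hr : Nat.Coprime r n) :
    ∃ σ : ℂ ≃+* ℂ, ∀ x : ℂ, x ^ n = 1 → σ x = x ^ r := by
  haveI : NeZero n := ⟨hn.ne'⟩
  set ζ : ℂ := Complex.exp (2 * Real.pi * Complex.I / n)
  have hζ : IsPrimitiveRoot ζ n := Complex.isPrimitiveRoot_exp n hn.ne'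
  obtain ⟨τ, hτ⟩ := exists_aut_adjoin ⟨n, hn⟩ hζ r hr
  obtain ⟨σ, hσ⟩ := extend_aut' (↥(Algebra.adjoin ℚ ({ζ} : Set ℂ))) Subtype.val_injective τ.toRingEquiv
  have hσζ : σ ζ = ζ ^ r := by
    have := hσ ⟨ζ, Algebra.subset_adjoin rfl⟩
    rw [show (τ.toRingEquiv ⟨ζ, Algebra.subset_adjoin rfl⟩) = τ ⟨ζ, Algebra.subset_adjoin rfl⟩ from rfl] at this
    rw [hτ] at this
    simpa using this
  refine ⟨σ, fun x hx => ?_⟩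
  obtain ⟨i, _, rfl⟩ := hζ.eq_pow_of_pow_eq_one hx
  rw [map_pow, hσζ, ← pow_mul, ← pow_mul, Nat.mul_comm]

/-- Let `G` be a finite group and `α ∈ Z²(G, ℂˣ)` a 2-cocycle whose class has finite order
`n` in `H²(G, ℂˣ)`.  If `r` is a natural number coprime to `n`, then the complex twisted
group algebras `ℂ^α G` and `ℂ^{α^r} G` are isomorphic as rings. -/
theorem stmt_17 (G : Type*) [Group G] [Fintype G]
    (α : G → G → ℂˣ) (hα : IsTwoCocycle' α)
    (n : ℕ) (hn : 0 < n)
    (hord : orderOf (H2.mk (⟨α, hα⟩ : twoCocycles G ℂˣ)) = n)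
    (r : ℕ) (hr : Nat.Coprime r n)
    (A : Type*) [Ring A] [Algebra ℂ A] (u : Module.Basis G ℂ A)
    (hu : ∀ g h : G, u g * u h = ((α g h : ℂˣ) : ℂ) • u (g * h))
    (B : Type*) [Ring B] [Algebra ℂ B] (v : Module.Basis G ℂ B)
    (hv : ∀ g h : G, v g * v h = (((α g h) ^ r : ℂˣ) : ℂ) • v (g * h)) :
    Nonempty (A ≃+* B) := by
  classical
  set a : twoCocycles G ℂˣ := ⟨α, hα⟩ with ha
  have h1 : H2.mk a ^ n = 1 := by rw [← hord]; exact pow_orderOf_eq_one _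
  have h2 : a ^ n ∈ (coboundaryHom G ℂˣ).range := by
    rw [← QuotientGroup.eq_one_iff]
    show QuotientGroup.mk' _ (a ^ n) = 1
    rw [map_pow]
    exact h1
  obtain ⟨μ, hμ⟩ := h2
  have hμ' : ∀ g h : G, μ g * μ h * (μ (g * h))⁻¹ = (α g h) ^ n := by
    intro g h
    have := congrFun (congrFun (congrArg Subtype.val hμ) g) h
    simpa [coboundaryHom, coboundaryFun, SubmonoidClass.coe_pow] using this
  obtain ⟨σ, hσ⟩ := exists_aut n hn r hr
  set m : G → ℂ := fun g => ((μ g : ℂˣ) : ℂ) with hm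
  have hm0 : ∀ g, m g ≠ 0 := fun g => Units.ne_zero _
  have hcob : ∀ g h : G, ((α g h : ℂ)) ^ n = m g * m h * (m (g * h))⁻¹ := by
    intro g h
    have := congrArg Units.val (hμ' g h).symm
    simpa [Units.val_pow_eq_pow_val, m] using this
  have hex : ∀ g : G, ∃ c : ℂ, c ^ n = (m g)⁻¹ :=
    fun g => IsAlgClosed.exists_pow_nat_eq _ hn
  choose ν hν using hex
  have hν0 : ∀ g, ν g ≠ 0 := by
    intro g h0
    apply inv_ne_zero (hm0 g)
    rw [← hν g, h0, zero_pow hn.ne']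
  have hσν0 : ∀ g, σ (ν g) ≠ 0 := by
    intro g h0
    exact hν0 g (by simpa using σ.injective (h0.trans (map_zero σ).symm))
  set t : G → ℂ := fun g => ν g ^ r * (σ (ν g))⁻¹ with ht
  have ht0 : ∀ g, t g ≠ 0 := fun g =>
    mul_ne_zero (pow_ne_zero _ (hν0 g)) (inv_ne_zero (hσν0 g))
  have hb : ∀ g h : G, ((α g h : ℂ) * ν g * ν h * (ν (g * h))⁻¹) ^ n = 1 := by
    intro g h
    rw [mul_pow, mul_pow, mul_pow, inv_pow, hν, hν, hν, hcob]
    have h1 := hm0 g; have h2 := hm0 h; have h3 := hm0 (g * h)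
    field_simp
  have key : ∀ g h : G, σ ((α g h : ℂ)) * t (g * h) = (α g h : ℂ) ^ r * t g * t h := by
    intro g h
    have hbr := hσ _ (hb g h)
    rw [map_mul, map_mul, map_mul, map_inv₀] at hbr
    have hσa : σ ((α g h : ℂ)) =
        (((α g h : ℂ) * ν g * ν h * (ν (g * h))⁻¹) ^ r) * σ (ν (g * h)) /
          (σ (ν g) * σ (ν h)) := by
      rw [eq_div_iff (mul_ne_zero (hσν0 g) (hσν0 h))]
      rw [← hbr, mul_assoc _ _ (σ (ν (g * h))), inv_mul_cancel₀ (hσν0 (g * h)), mul_one,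
        mul_assoc]
    rw [hσa, ht]
    simp only []
    rw [mul_pow, mul_pow, mul_pow, inv_pow]
    have h1 := hν0 g; have h2 := hν0 h; have h3 := hν0 (g * h)
    have h4 := hσν0 g; have h5 := hσν0 h; have h6 := hσν0 (g * h)
    field_simp
  -- the semilinear map
  set Φ : A → B := fun x => ∑ g : G, (σ (u.repr x g) * t g) • v g with hΦ
  set Ψ : B → A := fun y => ∑ g : G, (σ.symm (v.repr y g * (t g)⁻¹)) • u g with hΨ
  have hΦrepr : ∀ (x : A) (g : G), v.repr (Φ x) g = σ (u.repr x g) * t g := by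
    intro x g
    rw [hΦ]
    simp only []
    rw [show (∑ g : G, (σ (u.repr x g) * t g) • v g) =
      ∑ g : G, (fun g' => σ (u.repr x g') * t g') g • v g from rfl, Module.Basis.repr_sum_self]
  have hΨrepr : ∀ (y : B) (g : G), u.repr (Ψ y) g = σ.symm (v.repr y g * (t g)⁻¹) := by
    intro y g
    rw [hΨ]
    simp only []
    rw [show (∑ g : G, (σ.symm (v.repr y g * (t g)⁻¹)) • u g) =
      ∑ g : G, (fun g' => σ.symm (v.repr y g' * (t g')⁻¹)) g • u g from rfl, Module.Basis.repr_sum_self]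
  have hΨΦ : ∀ x, Ψ (Φ x) = x := by
    intro x
    rw [hΨ]
    simp only []
    calc (∑ g : G, (σ.symm (v.repr (Φ x) g * (t g)⁻¹)) • u g)
        = ∑ g : G, (u.repr x g) • u g := by
          refine Finset.sum_congr rfl fun g _ => ?_
          rw [hΦrepr, mul_assoc, mul_inv_cancel₀ (ht0 g), mul_one, RingEquiv.symm_apply_apply]
      _ = x := u.sum_repr x
  have hΦΨ : ∀ y, Φ (Ψ y) = y := by
    intro y
    rw [hΦ]
    simp only []
    calc (∑ g : G, (σ (u.repr (Ψ y) g) * t g) • v g)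
        = ∑ g : G, (v.repr y g) • v g := by
          refine Finset.sum_congr rfl fun g _ => ?_
          rw [hΨrepr, RingEquiv.apply_symm_apply, mul_assoc, inv_mul_cancel₀ (ht0 g), mul_one]
      _ = y := v.sum_repr y
  have hadd : ∀ x y, Φ (x + y) = Φ x + Φ y := by
    intro x y
    rw [hΦ]
    simp only [map_add, Finsupp.add_apply, map_add, add_mul, add_smul]
    rw [Finset.sum_add_distrib]
  have hsmul : ∀ (c : ℂ) (x : A), Φ (c • x) = σ c • Φ x := by
    intro c x
    rw [hΦ]
    simp only [map_smul, Finsupp.smul_apply, smul_eq_mul, map_mul, Finset.smul_sum, smul_smul,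
      mul_assoc]
  have hΦu : ∀ g : G, Φ (u g) = t g • v g := by
    intro g
    rw [hΦ]
    simp only []
    rw [Finset.sum_eq_single g]
    · simp
    · intro b _ hb2
      simp [Finsupp.single_apply, Ne.symm hb2]
    · simp
  let Φ' : A →+ B := AddMonoidHom.mk' Φ hadd
  have hΦ'eq : ∀ x, Φ' x = Φ x := fun _ => rfl
  have hmulbasis : ∀ g h : G, Φ (u g * u h) = Φ (u g) * Φ (u h) := by
    intro g h
    rw [hu g h, hsmul, hΦu, hΦu, hΦu, smul_smul, smul_mul_smul_comm, hv g h]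
    rw [smul_smul, Units.val_pow_eq_pow_val]
    rw [key g h]
    ring_nf
  have hmul : ∀ x y, Φ (x * y) = Φ x * Φ y := by
    intro x y
    conv_lhs => rw [← u.sum_repr x, ← u.sum_repr y]
    conv_rhs => rw [← u.sum_repr x, ← u.sum_repr y]
    rw [Finset.sum_mul_sum, ← hΦ'eq, map_sum]
    have lhs_eq : ∀ g h : G,
        Φ' ((u.repr x g • u g) * (u.repr y h • u h)) =
          (σ (u.repr x g) * σ (u.repr y h)) • (Φ (u g) * Φ (u h)) := by
      intro g h
      rw [smul_mul_assoc, mul_smul_comm, smul_smul, hΦ'eq, hsmul, map_mul, hmulbasis, mul_smul]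
    calc (∑ g : G, Φ' (∑ h : G, (u.repr x g • u g) * (u.repr y h • u h)))
        = ∑ g : G, ∑ h : G, (σ (u.repr x g) * σ (u.repr y h)) • (Φ (u g) * Φ (u h)) := by
          refine Finset.sum_congr rfl fun g _ => ?_
          rw [map_sum]
          exact Finset.sum_congr rfl fun h _ => lhs_eq g h
      _ = (∑ g : G, Φ (u.repr x g • u g)) * (∑ h : G, Φ (u.repr y h • u h)) := by
          rw [Finset.sum_mul_sum]
          refine Finset.sum_congr rfl fun g _ => Finset.sum_congr rfl fun h _ => ?_
          rw [hsmul, hsmul, smul_mul_assoc, mul_smul_comm, smul_smul]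
      _ = (∑ g : G, Φ' (u.repr x g • u g)) * (∑ h : G, Φ' (u.repr y h • u h)) := rfl
      _ = Φ' (∑ g : G, u.repr x g • u g) * Φ' (∑ h : G, u.repr y h • u h) := by
          rw [map_sum, map_sum]
  exact ⟨{ toFun := Φ, invFun := Ψ, left_inv := hΨΦ, right_inv := hΦΨ,
           map_mul' := hmul, map_add' := hadd }⟩
end
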